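/- arXiv:1501.07709 — 3 statements merged into one kernel-verified Lean document; each statement's English description precedes it below -/
import Mathlib

section
/- Let Z, B ⊆ ℕ. Then B is Z-hyperimmune if and only if for every essential Σ⁰₁(Z) predicate φ(U) of finite sets, there exists a finite set A ⊆ ℕ \ B such that φ(A) holds. -/
open Classical in
/-- The characteristic function of a set of naturals. -/
noncomputable def chi (Z : Set ℕ) : ℕ → ℕ := fun n => if n ∈ Z then 1 else 0

/-- Partial functions `ℕ →. ℕ` recursive in an oracle `O : ℕ → ℕ`. -/
inductive OracleRecursiveIn (O : ℕ → ℕ) : (ℕ →. ℕ) → Prop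
  | zero : OracleRecursiveIn O (pure 0)
  | succ : OracleRecursiveIn O ↑Nat.succ
  | left : OracleRecursiveIn O ↑fun n : ℕ => n.unpair.1
  | right : OracleRecursiveIn O ↑fun n : ℕ => n.unpair.2
  | oracle : OracleRecursiveIn O ↑O
  | pair {f g} : OracleRecursiveIn O f → OracleRecursiveIn O g →
      OracleRecursiveIn O fun n => Nat.pair <$> f n <*> g n
  | comp {f g} : OracleRecursiveIn O f → OracleRecursiveIn O g →
      OracleRecursiveIn O fun n => g n >>= f
  | prec {f g} : OracleRecursiveIn O f → OracleRecursiveIn O g →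
      OracleRecursiveIn O (Nat.unpaired fun a n =>
        n.rec (f a) fun y IH => do let i ← IH; g (Nat.pair a (Nat.pair y i)))
  | rfind {f} : OracleRecursiveIn O f →
      OracleRecursiveIn O fun a => Nat.rfind fun n => (fun m => m = 0) <$> f (Nat.pair a n)

/-- `f : ℕ → ℕ` is computable relative to (the characteristic function of) `Z`. -/
def FunComputableIn (Z : Set ℕ) (f : ℕ → ℕ) : Prop := OracleRecursiveIn (chi Z) f

/-- The set `S` is computable relative to `Z`. -/
def SetComputableIn (Z S : Set ℕ) : Prop := FunComputableIn Z (chi S)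

/-- The set `W` is computably enumerable relative to `Z`. -/
def CeIn (Z W : Set ℕ) : Prop := ∃ g : ℕ →. ℕ, OracleRecursiveIn (chi Z) g ∧ W = g.Dom

/-- The join `X ⊕ Z = {2n : n ∈ X} ∪ {2n+1 : n ∈ Z}`. -/
def join (X Z : Set ℕ) : Set ℕ :=
  {k | (∃ n ∈ X, k = 2 * n) ∨ (∃ n ∈ Z, k = 2 * n + 1)}

/-- `D k` is the finite set of naturals with canonical code `k`. -/
def D (k : ℕ) : Finset ℕ := Denumerable.ofNat (Finset ℕ) k

/-- `B` is `Z`-hyperimmune: every `Z`-c.e. array `(D (f i))_{i}` of pairwise disjoint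
finite sets has a member disjoint from `B`. -/
def Hyperimmune (Z B : Set ℕ) : Prop :=
  ∀ f : ℕ → ℕ, FunComputableIn Z f →
    (∀ i j, i ≠ j → Disjoint (D (f i)) (D (f j))) →
    ∃ i, ∀ x ∈ D (f i), x ∉ B

/-- A Σ⁰₁(Z) predicate of finite sets: the set of canonical codes on which it
holds is computably enumerable relative to `Z`. -/
def Sigma01Pred (Z : Set ℕ) (φ : Finset ℕ → Prop) : Prop := CeIn Z {k | φ (D k)}

/-- A predicate of finite sets is essential if for every `x` it holds of some
finite set all of whose elements exceed `x` (i.e. `min A > x`). -/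
def EssentialPred (φ : Finset ℕ → Prop) : Prop :=
  ∀ x : ℕ, ∃ A : Finset ℕ, (∀ a ∈ A, x < a) ∧ φ A

namespace OracleRecursiveIn

variable {O : ℕ → ℕ}

theorem of_eq {f g : ℕ →. ℕ} (hf : OracleRecursiveIn O f) (h : ∀ n, f n = g n) :
    OracleRecursiveIn O g := (funext h : f = g) ▸ hf

theorem of_partrec {f : ℕ →. ℕ} (hf : Nat.Partrec f) : OracleRecursiveIn O f := by
  induction hf with
  | zero => exact .zero
  | succ => exact .succ
  | left => exact .left
  | right => exact .right
  | pair _ _ ihf ihg => exact .pair ihf ihg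
  | comp _ _ ihf ihg => exact .comp ihf ihg
  | prec _ _ ihf ihg => exact .prec ihf ihg
  | rfind _ ih => exact .rfind ih

theorem of_primrec {f : ℕ → ℕ} (hf : Primrec f) : OracleRecursiveIn O ↑f :=
  of_partrec (Nat.Partrec.of_primrec (Primrec.nat_iff.1 hf))

theorem totalComp {f g : ℕ → ℕ} (hf : OracleRecursiveIn O ↑f) (hg : OracleRecursiveIn O ↑g) :
    OracleRecursiveIn O ↑(fun n => f (g n)) :=
  (hf.comp hg (f := ↑f) (g := ↑g)).of_eq fun n => by
    simp [PFun.coe_val, Part.bind_some]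
    exact Part.bind_some _ _

theorem totalPair {f g : ℕ → ℕ} (hf : OracleRecursiveIn O ↑f) (hg : OracleRecursiveIn O ↑g) :
    OracleRecursiveIn O ↑(fun n => Nat.pair (f n) (g n)) :=
  (OracleRecursiveIn.pair hf hg).of_eq fun n => by
    simp [PFun.coe_val, Seq.seq]

def precTotal (f g : ℕ → ℕ) : ℕ → ℕ :=
  Nat.unpaired fun a n => n.rec (f a) fun y IH => g (Nat.pair a (Nat.pair y IH))

theorem totalPrec {f g : ℕ → ℕ} (hf : OracleRecursiveIn O ↑f) (hg : OracleRecursiveIn O ↑g) :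
    OracleRecursiveIn O ↑(precTotal f g) :=
  (OracleRecursiveIn.prec hf hg).of_eq fun n => by
    simp only [precTotal, Nat.unpaired, PFun.coe_val, Part.bind_eq_bind]
    induction n.unpair.2 with
    | zero => rfl
    | succ m ih =>
      simp only [Part.bind_eq_bind] at ih ⊢
      rw [ih]
      simp

theorem totalRfind {f : ℕ → ℕ} (hf : OracleRecursiveIn O ↑f)
    (htot : ∀ a, ∃ n, f (Nat.pair a n) = 0) :
    ∃ F : ℕ → ℕ, OracleRecursiveIn O ↑F ∧ ∀ a, f (Nat.pair a (F a)) = 0 := by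
  refine ⟨fun a => Nat.find (htot a), ?_, fun a => Nat.find_spec (htot a)⟩
  refine (OracleRecursiveIn.rfind hf).of_eq fun a => ?_
  refine Part.eq_some_iff.2 (Nat.mem_rfind.2 ⟨?_, fun {m} hm => ?_⟩)
  · simp [PFun.coe_val, Nat.find_spec (htot a)]
  · simp [PFun.coe_val, Nat.find_min (htot a) hm]

end OracleRecursiveIn

theorem total_of_eq {O : ℕ → ℕ} {f g : ℕ → ℕ} (hf : OracleRecursiveIn O ↑f)
    (h : ∀ n, f n = g n) : OracleRecursiveIn O ↑g := by
  have : f = g := funext h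
  exact this ▸ hf

theorem precTotal_zero (f g : ℕ → ℕ) (a : ℕ) :
    OracleRecursiveIn.precTotal f g (Nat.pair a 0) = f a := by
  simp [OracleRecursiveIn.precTotal]

theorem precTotal_succ (f g : ℕ → ℕ) (a n : ℕ) :
    OracleRecursiveIn.precTotal f g (Nat.pair a (n + 1)) =
      g (Nat.pair a (Nat.pair n (OracleRecursiveIn.precTotal f g (Nat.pair a n)))) := by
  simp [OracleRecursiveIn.precTotal]

/-- The list `[O 0, ..., O (u-1)]`. -/
def segList (O : ℕ → ℕ) (u : ℕ) : List ℕ := (List.range u).map O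

/-- The encoded initial segment of the oracle. -/
def segN (O : ℕ → ℕ) (u : ℕ) : ℕ := Encodable.encode (segList O u)

theorem segList_succ (O : ℕ → ℕ) (u : ℕ) : segList O (u + 1) = segList O u ++ [O u] := by
  simp [segList, List.range_succ]

theorem segList_get (O : ℕ → ℕ) {u n : ℕ} (h : n < u) :
    (segList O u)[n]? = some (O n) := by
  simp only [segList, List.getElem?_map, List.getElem?_range h,
    Option.map_some]

private def snocN : ℕ → ℕ := fun p =>
  Encodable.encode ((Denumerable.ofNat (List ℕ) p.unpair.1) ++ [p.unpair.2])

private def oStep (O : ℕ → ℕ) : ℕ → ℕ := fun m =>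
  snocN (Nat.pair (m.unpair.2.unpair.2) (O (m.unpair.2.unpair.1)))

private theorem snocN_eq (p : ℕ) : snocN p =
    Encodable.encode ((Denumerable.ofNat (List ℕ) p.unpair.1) ++ [p.unpair.2]) := rfl

private theorem oStep_eq (O : ℕ → ℕ) (m : ℕ) : oStep O m =
    snocN (Nat.pair (m.unpair.2.unpair.2) (O (m.unpair.2.unpair.1))) := rfl

theorem segN_recursiveIn (O : ℕ → ℕ) : OracleRecursiveIn O ↑(segN O) := by
  classical
  have hsnoc : Primrec snocN := by
    have h1 : Primrec fun p : ℕ => Denumerable.ofNat (List ℕ) p.unpair.1 :=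
      (Primrec.ofNat (List ℕ)).comp (Primrec.fst.comp Primrec.unpair)
    have h2 : Primrec fun p : ℕ => ([p.unpair.2] : List ℕ) :=
      Primrec.list_cons.comp (Primrec.snd.comp Primrec.unpair) (Primrec.const [])
    exact Primrec.encode.comp (Primrec.list_append.comp h1 h2)
  have hg : OracleRecursiveIn O ↑(oStep O) := by
    have hx : OracleRecursiveIn O ↑(fun m : ℕ => m.unpair.2.unpair.2) :=
      .of_primrec ((Primrec.snd.comp Primrec.unpair).comp (Primrec.snd.comp Primrec.unpair))
    have hy : OracleRecursiveIn O ↑(fun m : ℕ => O (m.unpair.2.unpair.1)) :=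
      OracleRecursiveIn.totalComp .oracle
        (.of_primrec ((Primrec.fst.comp Primrec.unpair).comp (Primrec.snd.comp Primrec.unpair)))
    exact total_of_eq (OracleRecursiveIn.totalComp (.of_primrec hsnoc) (OracleRecursiveIn.totalPair hx hy))
      fun m => rfl
  have base := OracleRecursiveIn.totalPrec (f := fun _ => 0) (g := oStep O)
    (.of_primrec (Primrec.const 0)) hg
  have comp1 : OracleRecursiveIn O
      ↑(fun u => OracleRecursiveIn.precTotal (fun _ => 0) (oStep O) (Nat.pair 0 u)) :=
    OracleRecursiveIn.totalComp base (.of_primrec (Primrec₂.natPair.comp (Primrec.const 0) Primrec.id))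
  refine total_of_eq comp1 fun u => ?_
  induction u with
  | zero =>
    rw [precTotal_zero]
    simp [segN, segList]
  | succ u ih =>
    rw [precTotal_succ, ih, oStep_eq, snocN_eq]
    simp only [Nat.unpair_pair, segN, Denumerable.ofNat_encode, segList_succ]

/-- The canonical finite set with code `k`, as a list. -/
def Dlist (k : ℕ) : List ℕ := Denumerable.raise' (Denumerable.ofNat (List ℕ) k) 0

theorem mem_D_iff (x k : ℕ) : x ∈ D k ↔ x ∈ Dlist k := by
  show x ∈ Denumerable.ofNat (Finset ℕ) k ↔ _
  rw [show Denumerable.ofNat (Finset ℕ) k =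
    Finset.map (Denumerable.eqv ℕ).symm.toEmbedding
      (Denumerable.raise'Finset (Denumerable.ofNat (List ℕ) k) 0) from rfl]
  simp [Finset.mem_map, Denumerable.raise'Finset, Dlist, Denumerable.eqv]
  exact Iff.rfl

private def raiseStep : List ℕ × ℕ → ℕ → List ℕ × ℕ := fun s m => (s.1 ++ [m + s.2], m + s.2 + 1)

private theorem foldl_raise : ∀ (l : List ℕ) (res : List ℕ) (b : ℕ),
    (l.foldl raiseStep (res, b)).1 = res ++ Denumerable.raise' l b
  | [], res, b => by simp [Denumerable.raise']
  | m :: l, res, b => by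
    show (l.foldl raiseStep (res ++ [m + b], m + b + 1)).1 = _
    rw [foldl_raise l]
    simp [Denumerable.raise']

theorem Dlist_primrec : Primrec Dlist := by
  have hh : Primrec₂ fun (_ : ℕ) (p : (List ℕ × ℕ) × ℕ) => raiseStep p.1 p.2 := by
    have e1 : Primrec fun p : (List ℕ × ℕ) × ℕ => p.1.1 ++ [p.2 + p.1.2] :=
      Primrec.list_append.comp (Primrec.fst.comp Primrec.fst)
        (Primrec.list_cons.comp
          (Primrec.nat_add.comp Primrec.snd (Primrec.snd.comp Primrec.fst))
          (Primrec.const []))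
    have e2 : Primrec fun p : (List ℕ × ℕ) × ℕ => p.2 + p.1.2 + 1 :=
      Primrec.succ.comp (Primrec.nat_add.comp Primrec.snd (Primrec.snd.comp Primrec.fst))
    exact ((e1.pair e2).comp Primrec.snd).to₂
  have hfold : Primrec fun k : ℕ =>
      ((Denumerable.ofNat (List ℕ) k).foldl (fun s b => raiseStep s b) (([], 0) : List ℕ × ℕ)) :=
    Primrec.list_foldl (Primrec.ofNat (List ℕ)) (Primrec.const ([], 0)) hh
  exact (Primrec.fst.comp hfold).of_eq fun k => (foldl_raise _ [] 0).trans (by simp [Dlist])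

private theorem le_foldr_max : ∀ (l : List ℕ) (x : ℕ), x ∈ l → x ≤ l.foldr max 0
  | a :: l, x, h => by
    rcases List.mem_cons.1 h with rfl | h
    · exact le_max_left _ _
    · exact le_trans (le_foldr_max l x h) (le_max_right _ _)

/-- max of the canonical finite set. -/
def maxD (k : ℕ) : ℕ := (Dlist k).foldr max 0

theorem maxD_primrec : Primrec maxD :=
  Primrec.list_foldr Dlist_primrec (Primrec.const 0)
    ((Primrec.nat_max.comp (Primrec.fst.comp Primrec.snd) (Primrec.snd.comp Primrec.snd)).to₂)

theorem le_maxD {x k : ℕ} (h : x ∈ Dlist k) : x ≤ maxD k := le_foldr_max _ _ h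

/-- `gtTest (pair b k) = 0` iff every element of `D k` exceeds `b`. -/
def gtTest (p : ℕ) : ℕ :=
  cond ((Dlist p.unpair.2).all fun x => decide (p.unpair.1 < x)) 0 1

theorem gtTest_primrec : Primrec gtTest := by
  have hb : Primrec fun p : ℕ => (Dlist p.unpair.2).all fun x => decide (p.unpair.1 < x) := by
    have hstep : Primrec₂ fun (p : ℕ) (q : ℕ × Bool) => decide (p.unpair.1 < q.1) && q.2 := by
      have hc : Primrec fun r : ℕ × (ℕ × Bool) => decide (r.1.unpair.1 < r.2.1) :=
        PrimrecPred.decide (Primrec.nat_lt.comp ((Primrec.fst.comp Primrec.unpair).comp Primrec.fst)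
          (Primrec.fst.comp Primrec.snd))
      exact (Primrec.cond hc (Primrec.snd.comp Primrec.snd) (Primrec.const false)).to₂.of_eq
        fun p q => by cases h : decide (p.unpair.1 < q.1) <;> simp [h]
    have : Primrec fun p : ℕ =>
        (Dlist p.unpair.2).foldr (fun x r => decide (p.unpair.1 < x) && r) true :=
      Primrec.list_foldr (Dlist_primrec.comp (Primrec.snd.comp Primrec.unpair))
        (Primrec.const true) hstep
    exact this.of_eq fun p => by
      induction Dlist p.unpair.2 with
      | nil => simp
      | cons a l ih => simp [List.all_cons, ← ih]
  exact Primrec.cond hb (Primrec.const 0) (Primrec.const 1)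

theorem gtTest_eq_zero {b k : ℕ} : gtTest (Nat.pair b k) = 0 ↔ ∀ x ∈ Dlist k, b < x := by
  have hcond : ∀ c : Bool, (cond c 0 1 = 0 ↔ c = true) := by decide
  unfold gtTest
  rw [hcond, Nat.unpair_pair, List.all_eq_true]
  simp

private theorem part_mem_fmap {α β : Type} {f : α → β} {x : Part α} {b : β} :
    b ∈ f <$> x ↔ ∃ a ∈ x, f a = b := by
  rw [Part.map_eq_map, Part.mem_map_iff]

private theorem part_mem_seq {x g : Part ℕ} {h : ℕ → ℕ → ℕ} {y : ℕ} :
    y ∈ (h <$> x <*> g) ↔ ∃ a ∈ x, ∃ b ∈ g, y = h a b := by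
  simp [Seq.seq]
  tauto

theorem use_principle {O : ℕ → ℕ} {f : ℕ →. ℕ} (hf : OracleRecursiveIn O f) :
    ∃ G : List ℕ → ℕ →. ℕ, Partrec₂ G ∧
      (∀ u n y, y ∈ G (segList O u) n → y ∈ f n) ∧
      (∀ n y, y ∈ f n → ∃ u₀, ∀ u, u₀ ≤ u → y ∈ G (segList O u) n) := by
  induction hf with
  | zero =>
    refine ⟨fun _ _ => Part.some 0, ?_, ?_, ?_⟩
    · exact Partrec.const' (Part.some 0)
    · intro u n y hy; exact hy
    · intro n y hy; exact ⟨0, fun u _ => hy⟩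
  | succ =>
    refine ⟨fun _ n => Part.some n.succ, ?_, ?_, ?_⟩
    · exact Computable.succ.comp Computable.snd
    · intro u n y hy; exact hy
    · intro n y hy; exact ⟨0, fun u _ => hy⟩
  | left =>
    refine ⟨fun _ n => Part.some n.unpair.1, ?_, ?_, ?_⟩
    · exact (Primrec.fst.comp Primrec.unpair).to_comp.comp Computable.snd
    · intro u n y hy; exact hy
    · intro n y hy; exact ⟨0, fun u _ => hy⟩
  | right =>
    refine ⟨fun _ n => Part.some n.unpair.2, ?_, ?_, ?_⟩
    · exact (Primrec.snd.comp Primrec.unpair).to_comp.comp Computable.snd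
    · intro u n y hy; exact hy
    · intro n y hy; exact ⟨0, fun u _ => hy⟩
  | oracle =>
    refine ⟨fun L n => Part.ofOption (L[n]?), ?_, ?_, ?_⟩
    · exact Computable.ofOption (Computable.list_getElem?.comp Computable.fst Computable.snd)
    · intro u n y hy
      rw [Part.mem_ofOption] at hy
      by_cases h : n < u
      · rw [segList_get O h] at hy
        cases hy
        exact Part.mem_some _
      · rw [List.getElem?_eq_none (by simp [segList]; omega)] at hy
        cases hy
    · intro n y hy
      have : y = O n := Part.mem_some_iff.1 hy
      subst this
      exact ⟨n + 1, fun u hu => by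
        rw [Part.mem_ofOption, segList_get O (by omega)]; rfl⟩
  | pair hf' hg' ihf ihg =>
    obtain ⟨Gf, pf, sf, cf⟩ := ihf
    obtain ⟨Gg, pg, sg, cg⟩ := ihg
    refine ⟨fun L n => Nat.pair <$> Gf L n <*> Gg L n, ?_, ?_, ?_⟩
    · have hinner : Partrec₂ fun (p : List ℕ × ℕ) (a : ℕ) =>
          (Gg p.1 p.2).map fun b => Nat.pair a b :=
        (Partrec.map (pg.comp (Computable.fst.comp Computable.fst)
            (Computable.snd.comp Computable.fst))
          (((Primrec₂.natPair.comp (Primrec.snd.comp Primrec.fst)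
            Primrec.snd).to_comp).to₂)).to₂
      exact (pf.bind hinner).of_eq fun p => by
        ext y
        rw [part_mem_seq]
        simp [Part.bind_eq_bind, Part.mem_bind_iff, Part.mem_map_iff]
        tauto
    · intro u n y hy
      rcases part_mem_seq.1 hy with ⟨a, ha, b, hb, rfl⟩
      exact part_mem_seq.2 ⟨a, sf u n a ha, b, sg u n b hb, rfl⟩
    · intro n y hy
      rcases part_mem_seq.1 hy with ⟨a, ha, b, hb, rfl⟩
      obtain ⟨u₁, h1⟩ := cf n a ha
      obtain ⟨u₂, h2⟩ := cg n b hb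
      refine ⟨max u₁ u₂, fun u hu => ?_⟩
      exact part_mem_seq.2 ⟨a, h1 u (le_trans (le_max_left _ _) hu),
        b, h2 u (le_trans (le_max_right _ _) hu), rfl⟩
  | comp hf' hg' ihf ihg =>
    obtain ⟨Gf, pf, sf, cf⟩ := ihf
    obtain ⟨Gg, pg, sg, cg⟩ := ihg
    refine ⟨fun L n => (Gg L n).bind (Gf L), ?_, ?_, ?_⟩
    · exact pg.bind ((pf.comp (Computable.fst.comp Computable.fst) Computable.snd).to₂)
    · intro u n y hy
      rcases Part.mem_bind_iff.1 hy with ⟨a, ha, hya⟩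
      simp only [Part.bind_eq_bind]
      exact Part.mem_bind_iff.2 ⟨a, sg u n a ha, sf u a y hya⟩
    · intro n y hy
      simp only [Part.bind_eq_bind] at hy
      rcases Part.mem_bind_iff.1 hy with ⟨a, ha, hya⟩
      obtain ⟨u₁, h1⟩ := cg n a ha
      obtain ⟨u₂, h2⟩ := cf a y hya
      refine ⟨max u₁ u₂, fun u hu => ?_⟩
      exact Part.mem_bind_iff.2 ⟨a, h1 u (le_trans (le_max_left _ _) hu),
        h2 u (le_trans (le_max_right _ _) hu)⟩
  | prec hf' hg' ihf ihg =>
    obtain ⟨Gf, pf, sf, cf⟩ := ihf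
    obtain ⟨Gg, pg, sg, cg⟩ := ihg
    refine ⟨fun L => Nat.unpaired fun a n =>
      n.rec (Gf L a) fun y IH => IH.bind fun i => Gg L (Nat.pair a (Nat.pair y i)), ?_, ?_, ?_⟩
    · have hf'' : Computable fun p : List ℕ × ℕ => p.2.unpair.2 :=
        (Primrec.snd.comp (Primrec.unpair.comp Primrec.snd)).to_comp
      have hg'' : Partrec fun p : List ℕ × ℕ => Gf p.1 p.2.unpair.1 :=
        pf.comp Computable.fst ((Primrec.fst.comp (Primrec.unpair.comp Primrec.snd)).to_comp)
      have hh'' : Partrec₂ fun (p : List ℕ × ℕ) (yi : ℕ × ℕ) =>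
          Gg p.1 (Nat.pair p.2.unpair.1 (Nat.pair yi.1 yi.2)) :=
        (pg.comp (Computable.fst.comp Computable.fst)
          ((Primrec₂.natPair.comp
              ((Primrec.fst.comp (Primrec.unpair.comp Primrec.snd)).comp Primrec.fst)
              (Primrec₂.natPair.comp (Primrec.fst.comp Primrec.snd)
                (Primrec.snd.comp Primrec.snd))).to_comp)).to₂
      exact (Partrec.nat_rec hf'' hg'' hh'').of_eq fun p => rfl
    · intro u n y hy
      simp only [Nat.unpaired] at hy ⊢
      revert y
      induction n.unpair.2 with
      | zero => exact fun y hy => sf u _ y hy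
      | succ m ih =>
        intro y hy
        rcases Part.mem_bind_iff.1 hy with ⟨i, hi, hyi⟩
        simp only [Part.bind_eq_bind]
        exact Part.mem_bind_iff.2 ⟨i, ih i hi, sg u _ y hyi⟩
    · intro n y hy
      simp only [Nat.unpaired] at hy ⊢
      revert y
      induction n.unpair.2 with
      | zero => exact fun y hy => cf _ y hy
      | succ m ih =>
        intro y hy
        simp only [Part.bind_eq_bind] at hy
        rcases Part.mem_bind_iff.1 hy with ⟨i, hi, hyi⟩
        obtain ⟨u₁, h1⟩ := ih i hi
        obtain ⟨u₂, h2⟩ := cg _ y hyi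
        refine ⟨max u₁ u₂, fun u hu => ?_⟩
        exact Part.mem_bind_iff.2 ⟨i, h1 u (le_trans (le_max_left _ _) hu),
          h2 u (le_trans (le_max_right _ _) hu)⟩
  | rfind hf' ihf =>
    obtain ⟨Gf, pf, sf, cf⟩ := ihf
    refine ⟨fun L a => Nat.rfind fun k => (fun m => m = 0) <$> Gf L (Nat.pair a k), ?_, ?_, ?_⟩
    · have hp : Partrec₂ fun (p : List ℕ × ℕ) (k : ℕ) =>
          (fun m => decide (m = 0)) <$> Gf p.1 (Nat.pair p.2 k) :=
        (Partrec.map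
          (pf.comp (Computable.fst.comp Computable.fst)
            ((Primrec₂.natPair.comp (Primrec.snd.comp Primrec.fst)
              Primrec.snd).to_comp))
          (((PrimrecPred.decide (Primrec.eq.comp Primrec.snd (Primrec.const 0))).to_comp).to₂)).to₂
      exact (Partrec.rfind hp).of_eq fun p => rfl
    · intro u a y hy
      have htrue := Nat.rfind_spec hy
      have hmin := fun {m} (hm : m < y) => Nat.rfind_min hy hm
      rcases part_mem_fmap.1 htrue with ⟨m0, hm0, hd0⟩
      have hm0' : m0 = 0 := by simpa using hd0
      refine Nat.mem_rfind.2 ⟨?_, fun {k} hk => ?_⟩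
      · exact part_mem_fmap.2 ⟨m0, sf u _ m0 hm0, hd0⟩
      · rcases part_mem_fmap.1 (hmin hk) with ⟨mk, hmk, hdk⟩
        exact part_mem_fmap.2 ⟨mk, sf u _ mk hmk, hdk⟩
    · intro a y hy
      have htrue := Nat.rfind_spec hy
      have hmin := fun {m} (hm : m < y) => Nat.rfind_min hy hm
      have H : ∀ k, ∃ m u₀, k ≤ y →
          (∀ u, u₀ ≤ u → m ∈ Gf (segList O u) (Nat.pair a k)) ∧
          (k = y → decide (m = 0) = true) ∧ (k < y → decide (m = 0) = false) := by
        intro k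
        by_cases hk : k ≤ y
        · rcases lt_or_eq_of_le hk with hlt | rfl
          · rcases part_mem_fmap.1 (hmin hlt) with ⟨mk, hmk, hdk⟩
            obtain ⟨u₀, hu₀⟩ := cf _ mk hmk
            exact ⟨mk, u₀, fun _ => ⟨hu₀, fun h => absurd h (by omega), fun _ => hdk⟩⟩
          · rcases part_mem_fmap.1 htrue with ⟨m0, hm0, hd0⟩
            obtain ⟨u₀, hu₀⟩ := cf _ m0 hm0
            exact ⟨m0, u₀, fun _ => ⟨hu₀, fun _ => hd0, fun h => absurd h (by omega)⟩⟩
        · exact ⟨0, 0, fun h => absurd h hk⟩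
      choose M U hMU using H
      refine ⟨(Finset.range (y + 1)).sup U, fun u hu => ?_⟩
      refine Nat.mem_rfind.2 ⟨?_, fun {k} hk => ?_⟩
      · refine part_mem_fmap.2 ⟨M y, (hMU y le_rfl).1 u
          (le_trans (Finset.le_sup (Finset.mem_range.2 (by omega))) hu), (hMU y le_rfl).2.1 rfl⟩
      · exact part_mem_fmap.2 ⟨M k, (hMU k (le_of_lt hk)).1 u
          (le_trans (Finset.le_sup (Finset.mem_range.2 (by omega))) hu),
          (hMU k (le_of_lt hk)).2.2 hk⟩

section Forward

open Nat.Partrec (Code)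
open Nat.Partrec.Code

private theorem U1 : Primrec fun n : ℕ => n.unpair.1 := Primrec.fst.comp Primrec.unpair
private theorem U2 : Primrec fun n : ℕ => n.unpair.2 := Primrec.snd.comp Primrec.unpair

theorem hyperimmune_forward {Z B : Set ℕ} (hyp : Hyperimmune Z B) (φ : Finset ℕ → Prop)
    (hφ : Sigma01Pred Z φ) (hess : EssentialPred φ) :
    ∃ A : Finset ℕ, (↑A : Set ℕ) ⊆ Bᶜ ∧ φ A := by
  classical
  obtain ⟨g, hgrec, hdom⟩ := hφ
  set O := chi Z with hO
  obtain ⟨G, pG, sG, cG⟩ := use_principle hgrec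
  have hGhat : Nat.Partrec fun m : ℕ =>
      Part.bind (↑(Encodable.decode (α := List ℕ × ℕ) m) : Part (List ℕ × ℕ))
      fun p => (G p.1 p.2).map Encodable.encode := pG
  obtain ⟨c, hc⟩ := Code.exists_code.1 hGhat
  -- halting characterization
  have hkey : ∀ k, (g k).Dom ↔ ∃ u s : ℕ,
      (evaln s c (Nat.pair (segN O u) k)).isSome = true := by
    intro k
    constructor
    · intro hd
      obtain ⟨y, hy⟩ := Part.dom_iff_mem.1 hd
      obtain ⟨u₀, hu⟩ := cG k y hy
      have hmem : Encodable.encode y ∈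
          eval c (Nat.pair (segN O u₀) k) := by
        rw [hc]
        have heq : Nat.pair (segN O u₀) k =
            Encodable.encode ((segList O u₀, k) : List ℕ × ℕ) := rfl
        simp only [heq, Encodable.encodek, Part.coe_some, Part.bind_eq_bind, Part.bind_some]
        exact Part.mem_map_iff _ |>.2 ⟨y, hu u₀ le_rfl, rfl⟩
      obtain ⟨s, hs⟩ := evaln_complete.1 hmem
      exact ⟨u₀, s, by rw [Option.isSome_iff_exists]; exact ⟨_, hs⟩⟩
    · rintro ⟨u, s, hsome⟩
      obtain ⟨x, hx⟩ := Option.isSome_iff_exists.1 hsome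
      have hmem : x ∈ eval c (Nat.pair (segN O u) k) := evaln_sound hx
      rw [hc] at hmem
      have heq : Nat.pair (segN O u) k =
          Encodable.encode ((segList O u, k) : List ℕ × ℕ) := rfl
      simp only [heq, Encodable.encodek, Part.coe_some, Part.bind_eq_bind,
        Part.bind_some] at hmem
      obtain ⟨y, hy, -⟩ := Part.mem_map_iff _ |>.1 hmem
      exact Part.dom_iff_mem.2 ⟨y, sG u k y hy⟩
  -- the total test function
  set base : ℕ → ℕ := fun q =>
    cond ((evaln q.unpair.1.unpair.2.unpair.2 c
      (Nat.pair q.unpair.2 q.unpair.1.unpair.1)).isSome) 0 1 with hbase_def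
  have hbase : Primrec base := by
    have hs : Primrec fun q : ℕ => q.unpair.1.unpair.2.unpair.2 := U2.comp (U2.comp U1)
    have harg : Primrec fun q : ℕ => Nat.pair q.unpair.2 q.unpair.1.unpair.1 :=
      Primrec₂.natPair.comp U2 (U1.comp U1)
    have hev : Primrec fun q : ℕ =>
        evaln q.unpair.1.unpair.2.unpair.2 c (Nat.pair q.unpair.2 q.unpair.1.unpair.1) :=
      primrec_evaln.comp ((hs.pair (Primrec.const c)).pair harg)
    exact Primrec.cond (Primrec.option_isSome.comp hev) (Primrec.const 0) (Primrec.const 1)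
  set t : ℕ → ℕ := fun m => base (Nat.pair m (segN O m.unpair.2.unpair.1)) with ht_def
  have htrec : OracleRecursiveIn O ↑t :=
    OracleRecursiveIn.totalComp (.of_primrec hbase)
      (OracleRecursiveIn.totalPair (.of_primrec Primrec.id)
        (OracleRecursiveIn.totalComp (segN_recursiveIn O) (.of_primrec (U1.comp U2))))
  have hts : ∀ k p, t (Nat.pair k p) = 0 ↔
      (evaln p.unpair.2 c (Nat.pair (segN O p.unpair.1) k)).isSome = true := by
    intro k p
    have hcond : ∀ b : Bool, (cond b 0 1 = 0 ↔ b = true) := by decide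
    simp only [ht_def, hbase_def, Nat.unpair_pair, hcond]
  have hkey2 : ∀ k, (g k).Dom ↔ ∃ p, t (Nat.pair k p) = 0 := by
    intro k
    rw [hkey k]
    constructor
    · rintro ⟨u, s, h⟩
      exact ⟨Nat.pair u s, by rw [hts, Nat.unpair_pair]; exact h⟩
    · rintro ⟨p, h⟩
      exact ⟨p.unpair.1, p.unpair.2, (hts k p).1 h⟩
  -- the search function
  set Q : ℕ → ℕ := fun m =>
    t m.unpair.2 + gtTest (Nat.pair m.unpair.1 m.unpair.2.unpair.1) with hQ_def
  have hQrec : OracleRecursiveIn O ↑Q := by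
    have haddN : Primrec fun r : ℕ => r.unpair.1 + r.unpair.2 := Primrec.nat_add.comp U1 U2
    exact total_of_eq (OracleRecursiveIn.totalComp (.of_primrec haddN)
      (OracleRecursiveIn.totalPair (OracleRecursiveIn.totalComp htrec (.of_primrec U2))
        (.of_primrec (gtTest_primrec.comp (Primrec₂.natPair.comp U1 (U1.comp U2))))))
      fun n => by simp [hQ_def]
  have hQtot : ∀ b, ∃ n, Q (Nat.pair b n) = 0 := by
    intro b
    obtain ⟨A, hA, hφA⟩ := hess b
    set k := @Encodable.encode (Finset ℕ) Denumerable.toEncodable A with hk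
    have hDk : D k = A := by
      show Denumerable.ofNat (Finset ℕ) k = A
      rw [hk]
      exact Denumerable.ofNat_encode A
    have hgk : (g k).Dom := by
      have : k ∈ {k | φ (D k)} := by simp [Set.mem_setOf_eq, hDk, hφA]
      rw [hdom] at this
      exact this
    obtain ⟨p, hp⟩ := (hkey2 k).1 hgk
    refine ⟨Nat.pair k p, ?_⟩
    rw [hQ_def]
    simp only [Nat.unpair_pair]
    rw [hp, gtTest_eq_zero.2 fun x hx => hA x (by rw [← hDk] at *; exact (mem_D_iff x k).2 hx)]
  obtain ⟨search, hsearchrec, hsearch⟩ := OracleRecursiveIn.totalRfind hQrec hQtot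
  -- the chain
  set newb : ℕ → ℕ := fun s => max s.unpair.1 (maxD s.unpair.2.unpair.1) with hnewb_def
  have hnewb : Primrec newb := Primrec.nat_max.comp U1 (maxD_primrec.comp (U1.comp U2))
  set ch : ℕ → ℕ := fun i => Nat.rec (Nat.pair 0 (search 0))
    (fun _ IH => Nat.pair (newb IH) (search (newb IH))) i with hch_def
  have hchrec : OracleRecursiveIn O ↑ch := by
    have hstep : OracleRecursiveIn O ↑(fun s => Nat.pair (newb s) (search (newb s))) :=
      OracleRecursiveIn.totalComp
        (OracleRecursiveIn.totalPair (.of_primrec Primrec.id) hsearchrec) (.of_primrec hnewb)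
    have hg2 : OracleRecursiveIn O ↑(fun m : ℕ =>
        Nat.pair (newb m.unpair.2.unpair.2) (search (newb m.unpair.2.unpair.2))) :=
      OracleRecursiveIn.totalComp hstep (.of_primrec (U2.comp U2))
    have base2 := OracleRecursiveIn.totalPrec (f := fun _ => Nat.pair 0 (search 0)) (g := _)
      (.of_primrec (Primrec.const (Nat.pair 0 (search 0)))) hg2
    have comp2 : OracleRecursiveIn O ↑(fun i => OracleRecursiveIn.precTotal
        (fun _ => Nat.pair 0 (search 0))
        (fun m => Nat.pair (newb m.unpair.2.unpair.2) (search (newb m.unpair.2.unpair.2)))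
        (Nat.pair 0 i)) :=
      OracleRecursiveIn.totalComp base2 (.of_primrec (Primrec₂.natPair.comp (Primrec.const 0)
        Primrec.id))
    refine total_of_eq comp2 fun i => ?_
    induction i with
    | zero => rw [precTotal_zero]; rfl
    | succ i ih =>
      rw [precTotal_succ, ih]
      simp only [Nat.unpair_pair]
      rfl
  -- chain facts
  have hch0 : ch 0 = Nat.pair 0 (search 0) := rfl
  have hchS : ∀ i, ch (i + 1) = Nat.pair (newb (ch i)) (search (newb (ch i))) := fun i => rfl
  have hform : ∀ i, ch i = Nat.pair ((ch i).unpair.1) (search ((ch i).unpair.1)) := by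
    intro i
    cases i with
    | zero => rw [hch0]; simp [Nat.unpair_pair]
    | succ i => rw [hchS i]; simp [Nat.unpair_pair]
  have hQch : ∀ i, Q (Nat.pair ((ch i).unpair.1) ((ch i).unpair.2)) = 0 := by
    intro i
    have h2 : (ch i).unpair.2 = search ((ch i).unpair.1) := by
      conv_lhs => rw [hform i]
      simp [Nat.unpair_pair]
    rw [h2]
    exact hsearch _
  have hmono : ∀ i j, i ≤ j → (ch i).unpair.1 ≤ (ch j).unpair.1 := by
    have hstep1 : ∀ i, (ch i).unpair.1 ≤ (ch (i + 1)).unpair.1 := by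
      intro i
      rw [hchS i, Nat.unpair_pair]
      exact le_max_left _ _
    exact fun i j h => (monotone_nat_of_le_succ hstep1) h
  set fArr : ℕ → ℕ := fun i => (ch i).unpair.2.unpair.1 with hfArr_def
  have hfrec : FunComputableIn Z fArr :=
    OracleRecursiveIn.totalComp (.of_primrec (U1.comp U2)) hchrec
  -- decompose Q = 0
  have hQ0 : ∀ i, t ((ch i).unpair.2) = 0 ∧
      gtTest (Nat.pair ((ch i).unpair.1) (fArr i)) = 0 := by
    intro i
    simp only [hfArr_def]
    have := hQch i
    rw [hQ_def] at this
    simp only [Nat.unpair_pair] at this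
    omega
  have hφi : ∀ i, φ (D (fArr i)) := by
    intro i
    have h1 : t (Nat.pair (fArr i) ((ch i).unpair.2.unpair.2)) = 0 := by
      have := (hQ0 i).1
      rwa [← Nat.pair_unpair ((ch i).unpair.2)] at this
    have : (g (fArr i)).Dom := (hkey2 _).2 ⟨_, h1⟩
    have : fArr i ∈ g.Dom := this
    rw [← hdom] at this
    exact this
  have hgt : ∀ i, ∀ x ∈ Dlist (fArr i), (ch i).unpair.1 < x := fun i =>
    gtTest_eq_zero.1 (hQ0 i).2
  have hmaxle : ∀ i, maxD (fArr i) ≤ (ch (i + 1)).unpair.1 := by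
    intro i
    simp only [hfArr_def]
    rw [hchS i, Nat.unpair_pair, hnewb_def]
    exact le_max_right _ _
  have hdisj : ∀ i j, i ≠ j → Disjoint (D (fArr i)) (D (fArr j)) := by
    have key : ∀ i j, i < j → Disjoint (D (fArr i)) (D (fArr j)) := by
      intro i j hij
      rw [Finset.disjoint_left]
      intro x hxi hxj
      have h1 : x ≤ maxD (fArr i) := le_maxD ((mem_D_iff x _).1 hxi)
      have h2 : (ch j).unpair.1 < x := hgt j x ((mem_D_iff x _).1 hxj)
      have h3 : (ch (i + 1)).unpair.1 ≤ (ch j).unpair.1 := hmono (i + 1) j (by omega)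
      have h4 : maxD (fArr i) ≤ (ch (i + 1)).unpair.1 := hmaxle i
      omega
    intro i j hij
    rcases Nat.lt_or_ge i j with h | h
    · exact key i j h
    · exact (key j i (by omega)).symm
  obtain ⟨i, hi⟩ := hyp fArr hfrec hdisj
  exact ⟨D (fArr i), fun x hx => hi x hx, hφi i⟩

end Forward

section Backward

private theorem U1' : Primrec fun n : ℕ => n.unpair.1 := Primrec.fst.comp Primrec.unpair
private theorem U2' : Primrec fun n : ℕ => n.unpair.2 := Primrec.snd.comp Primrec.unpair

theorem hyperimmune_backward {Z B : Set ℕ}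
    (h : ∀ φ : Finset ℕ → Prop, Sigma01Pred Z φ → EssentialPred φ →
      ∃ A : Finset ℕ, (↑A : Set ℕ) ⊆ Bᶜ ∧ φ A) : Hyperimmune Z B := by
  intro f hf hdisj
  classical
  set φ : Finset ℕ → Prop := fun U => ∃ i, U = D (f i) with hφ_def
  have hDinj : ∀ b c : ℕ, D b = D c → b = c := by
    intro b c hbc
    have := congrArg (@Encodable.encode (Finset ℕ) Denumerable.toEncodable) hbc
    show b = c
    rwa [show D b = Denumerable.ofNat (Finset ℕ) b from rfl,
      show D c = Denumerable.ofNat (Finset ℕ) c from rfl,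
      Denumerable.encode_ofNat, Denumerable.encode_ofNat] at this
  have hsig : Sigma01Pred Z φ := by
    set hfn : ℕ → ℕ :=
      fun m => (f m.unpair.2 - m.unpair.1) + (m.unpair.1 - f m.unpair.2) with hh
    have hd : Primrec fun r : ℕ => (r.unpair.1 - r.unpair.2) + (r.unpair.2 - r.unpair.1) :=
      Primrec.nat_add.comp (Primrec.nat_sub.comp U1' U2') (Primrec.nat_sub.comp U2' U1')
    have hrec : OracleRecursiveIn (chi Z) ↑hfn :=
      total_of_eq
        (OracleRecursiveIn.totalComp (.of_primrec hd)
          (OracleRecursiveIn.totalPair (OracleRecursiveIn.totalComp hf (.of_primrec U2'))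
            (.of_primrec U1')))
        (fun n => by simp [hh])
    refine ⟨fun a => Nat.rfind fun n => (fun m => m = 0) <$> (↑hfn : ℕ →. ℕ) (Nat.pair a n),
      OracleRecursiveIn.rfind hrec, ?_⟩
    ext a
    show (∃ i, D a = D (f i)) ↔ _
    refine Iff.trans ?_ (PFun.mem_dom _ a).symm
    constructor
    · rintro ⟨i, hi⟩
      have hai : a = f i := hDinj _ _ hi
      have hdom : (Nat.rfind fun n =>
          (fun m => m = 0) <$> (↑hfn : ℕ →. ℕ) (Nat.pair a n)).Dom := by
        refine Nat.rfind_dom.2 ?_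
        refine ⟨i, ?_, fun {m} _ => trivial⟩
        refine part_mem_fmap.2 ⟨hfn (Nat.pair a i), Part.mem_some _, ?_⟩
        have h0 : hfn (Nat.pair a i) = 0 := by
          rw [hh]
          simp only [Nat.unpair_pair]
          omega
        simp [h0]
      exact Part.dom_iff_mem.1 hdom
    · rintro ⟨y, hy⟩
      have hspec := Nat.rfind_spec hy
      rcases part_mem_fmap.1 hspec with ⟨m, hm, hdm⟩
      have hm' : m = hfn (Nat.pair a y) := Part.mem_some_iff.1 hm
      have h0 : hfn (Nat.pair a y) = 0 := by
        rw [← hm']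
        simpa using hdm
      have hay : a = f y := by
        rw [hh] at h0
        simp only [Nat.unpair_pair] at h0
        omega
      exact ⟨y, by rw [hay]⟩
  have hess : EssentialPred φ := by
    intro x
    by_cases hemp : ∃ i, D (f i) = ∅
    · obtain ⟨i, hi⟩ := hemp
      exact ⟨∅, by simp, ⟨i, hi.symm⟩⟩
    · by_contra hcon
      push_neg at hcon
      have hsmall : ∀ i, ∃ a ∈ D (f i), a ≤ x := by
        intro i
        by_contra hno
        push_neg at hno
        exact hcon (D (f i)) (fun a ha => by have := hno a ha; omega) ⟨i, rfl⟩
      choose a ha hax using hsmall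
      have hinj : Function.Injective fun i => (⟨a i, Nat.lt_succ_of_le (hax i)⟩ : Fin (x + 1)) := by
        intro i j hij
        by_contra hne
        have haij : a i = a j := by
          have := congrArg Fin.val hij
          simpa using this
        exact (Finset.disjoint_left.1 (hdisj i j hne)) (ha i) (haij ▸ ha j)
      haveI : Finite ℕ := Finite.of_injective _ hinj
      exact not_finite ℕ
  obtain ⟨A, hsub, i, hAi⟩ := h φ hsig hess
  exact ⟨i, fun y hy => hsub (hAi ▸ hy)⟩

end Backward

/-- `B` is `Z`-hyperimmune iff every essential Σ⁰₁(Z) predicate of finite sets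
holds of some finite set `A ⊆ ℕ \ B`. -/
theorem stmt0 (Z B : Set ℕ) :
    Hyperimmune Z B ↔
      ∀ φ : Finset ℕ → Prop, Sigma01Pred Z φ → EssentialPred φ →
        ∃ A : Finset ℕ, (↑A : Set ℕ) ⊆ Bᶜ ∧ φ A :=
  ⟨fun hyp φ h1 h2 => hyperimmune_forward hyp φ h1 h2, hyperimmune_backward⟩
end

section
/- There exists a computable stable function f : [ℕ]² → ℕ such that for every i ∈ ℕ the set B_i = {x ∈ ℕ : lim_s f(x, s) ≠ i} is hyperimmune. Consequently, every infinite f-thin set H satisfies H ⊆ B_i for some i ∈ ℕ, and that B_i is not H-hyperimmune. -/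
namespace Stmt2
open Nat.Partrec (Code)
open Nat.Partrec.Code

def dl (k : ℕ) : List ℕ := Denumerable.raise' (Denumerable.ofNat (List ℕ) k) 0

lemma D_eq (k : ℕ) : D k = Finset.map (Denumerable.eqv ℕ).symm.toEmbedding
    (Denumerable.raise'Finset (Denumerable.ofNat (List ℕ) k) 0) :=
  Denumerable.ofNat_of_decode rfl

lemma mem_D_iff {x k : ℕ} : x ∈ D k ↔ x ∈ dl k := by
  rw [D_eq]
  simp [Denumerable.raise'Finset, dl, Finset.mem_map, Denumerable.eqv, Finset.mem_mk, Multiset.mem_coe]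
  exact Multiset.mem_coe

lemma D_singleton (x : ℕ) : D (Nat.pair x 0 + 1) = {x} := by
  ext y
  rw [mem_D_iff]
  simp [dl, Denumerable.list_ofNat_succ, Denumerable.raise']

/-! ### Boolean helpers -/

def memB (x : ℕ) (k : ℕ) : Bool := (dl k).foldr (fun y acc => (x == y) || acc) false

def allB (f : ℕ → Bool) (k : ℕ) : Bool := (dl k).foldr (fun y acc => f y && acc) true

def disjB (k k' : ℕ) : Bool := allB (fun x => !memB x k') k

def okPair (n k : ℕ) (L : List (ℕ × ℕ)) : Bool :=
  allB (fun x => decide (n < x)) k &&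
  L.foldr (fun p acc => ((!decide (p.1 < n)) || disjB k p.2) && acc) true

def satB (n : ℕ) (L : List (ℕ × ℕ)) : Bool := L.foldr (fun p acc => (p.1 == n) || acc) false

lemma memB_iff {x k : ℕ} : memB x k = true ↔ x ∈ dl k := by
  unfold memB
  induction dl k with
  | nil => simp
  | cons a l ih => simp [ih]

lemma allB_iff {f : ℕ → Bool} {k : ℕ} : allB f k = true ↔ ∀ x ∈ dl k, f x = true := by
  unfold allB
  induction dl k with
  | nil => simp
  | cons a l ih => simp [ih]

lemma disjB_iff {k k' : ℕ} : disjB k k' = true ↔ ∀ x ∈ dl k, x ∉ dl k' := by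
  simp only [disjB, allB_iff, Bool.not_eq_true']
  constructor
  · intro h x hx hx'
    have := h x hx
    rw [← memB_iff (k := k')] at hx'
    simp [hx'] at this
  · intro h x hx
    by_contra hc
    simp only [Bool.not_eq_false] at hc
    exact h x hx (memB_iff.1 hc)

lemma satB_iff {n : ℕ} {L : List (ℕ × ℕ)} : satB n L = true ↔ ∃ p ∈ L, p.1 = n := by
  unfold satB
  induction L with
  | nil => simp
  | cons a l ih => simp [ih]

lemma okPair_iff {n k : ℕ} {L : List (ℕ × ℕ)} : okPair n k L = true ↔
    (∀ x ∈ dl k, n < x) ∧ ∀ p ∈ L, p.1 < n → ∀ x ∈ dl k, x ∉ dl p.2 := by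
  unfold okPair
  rw [Bool.and_eq_true, allB_iff]
  apply and_congr
  · simp
  · induction L with
    | nil => simp
    | cons a l ih =>
      simp only [List.foldr_cons, Bool.and_eq_true, ih, List.mem_cons]
      constructor
      · rintro ⟨h1, h2⟩ p (rfl | hp) hlt
        · rw [Bool.or_eq_true] at h1
          rcases h1 with h | h
          · simp at h; omega
          · exact disjB_iff.1 h
        · exact h2 p hp hlt
      · intro h
        constructor
        · rw [Bool.or_eq_true]
          by_cases hlt : a.1 < n
          · exact Or.inr (disjB_iff.2 (h a (Or.inl rfl) hlt))
          · exact Or.inl (by simpa using hlt)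
        · exact fun p hp => h p (Or.inr hp)

/-! ### Searches -/

def osearch {α : Type} (f : ℕ → Option α) : ℕ → Option α :=
  fun s => Nat.rec none (fun i acc => acc <|> f i) s

@[simp] lemma osearch_zero {α : Type} (f : ℕ → Option α) : osearch f 0 = none := rfl

@[simp] lemma osearch_succ {α : Type} (f : ℕ → Option α) (s : ℕ) :
    osearch f (s + 1) = (osearch f s <|> f s) := rfl

lemma osearch_eq_none_iff {α : Type} {f : ℕ → Option α} {s : ℕ} :
    osearch f s = none ↔ ∀ i < s, f i = none := by
  induction s with
  | zero => simp
  | succ s ih =>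
    rw [osearch_succ]
    cases h : osearch f s with
    | none =>
      change f s = none ↔ _
      constructor
      · intro h2 i hi
        rcases Nat.lt_succ_iff_lt_or_eq.1 hi with hi | rfl
        · exact ih.1 h i hi
        · exact h2
      · intro h2; exact h2 s (Nat.lt_succ_self s)
    | some a =>
      change some a = none ↔ _
      constructor
      · intro h2; exact absurd h2 (by simp)
      · intro h2
        have : osearch f s = none := ih.2 (fun i hi => h2 i (Nat.lt_succ_of_lt hi))
        rw [h] at this; exact absurd this (by simp)

lemma osearch_some {α : Type} {f : ℕ → Option α} {s : ℕ} {a : α} (h : osearch f s = some a) :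
    ∃ i, i < s ∧ f i = some a ∧ ∀ j < i, f j = none := by
  induction s with
  | zero => simp [osearch] at h
  | succ s ih =>
    rw [osearch_succ] at h
    cases h2 : osearch f s with
    | some b =>
      rw [h2] at h; change some b = some a at h
      obtain ⟨i, hi, h3, h4⟩ := ih (h2.trans h)
      exact ⟨i, Nat.lt_succ_of_lt hi, h3, h4⟩
    | none =>
      rw [h2] at h; change f s = some a at h
      exact ⟨s, Nat.lt_succ_self s, h, fun j hj => osearch_eq_none_iff.1 h2 j hj⟩

/-! ### The construction -/

def tryI (s : ℕ) (L : List (ℕ × ℕ)) (n : ℕ) : Option ℕ :=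
  osearch (fun i => (evaln s (Denumerable.ofNat Code n.unpair.1) i).bind
    (fun k => if okPair n k L then some k else none)) s

def actF (s : ℕ) (L : List (ℕ × ℕ)) : Option (ℕ × ℕ) :=
  osearch (fun n => if satB n L then none else (tryI s L n).map (fun k => (n, k))) s

def filt (k : ℕ) (L : List (ℕ × ℕ)) : List (ℕ × ℕ) :=
  L.foldr (fun p acc => if disjB k p.2 then p :: acc else acc) []

lemma filt_eq (k : ℕ) (L : List (ℕ × ℕ)) : filt k L = L.filter (fun p => disjB k p.2) := by
  induction L with
  | nil => rfl
  | cons a l ih =>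
    simp only [filt, List.foldr_cons, List.filter_cons] at *
    by_cases h : disjB k a.2 <;> simp [h, ih]

def step (s : ℕ) (L : List (ℕ × ℕ)) : List (ℕ × ℕ) :=
  (actF s L).elim L (fun nk => nk :: filt nk.2 L)

def state (s : ℕ) : List (ℕ × ℕ) := Nat.rec [] (fun t ih => step t ih) s

@[simp] lemma state_zero : state 0 = [] := rfl

@[simp] lemma state_succ (s : ℕ) : state (s + 1) = step s (state s) := rfl

def colOf (L : List (ℕ × ℕ)) (x : ℕ) : ℕ :=
  ((L.foldr (fun p acc => if memB x p.2 then some p else acc) none).map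
    (fun p => p.1.unpair.2)).getD 0

def fc (x s : ℕ) : ℕ := colOf (state s) x

/-! ### Specs for the construction -/

lemma tryI_some {s n k : ℕ} {L : List (ℕ × ℕ)} (h : tryI s L n = some k) :
    okPair n k L = true ∧ ∃ i, k ∈ evaln s (Denumerable.ofNat Code n.unpair.1) i := by
  obtain ⟨i, _, h2, _⟩ := osearch_some h
  cases he : evaln s (Denumerable.ofNat Code n.unpair.1) i with
  | none => rw [he] at h2; simp at h2
  | some k' =>
    rw [he] at h2
    simp only [Option.bind_some] at h2
    by_cases hok : okPair n k' L = true
    · rw [if_pos hok] at h2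
      cases h2
      exact ⟨hok, i, he⟩
    · rw [if_neg hok] at h2; simp at h2

lemma tryI_ne_none {s n i k : ℕ} {L : List (ℕ × ℕ)} (hi : i < s)
    (he : evaln s (Denumerable.ofNat Code n.unpair.1) i = some k)
    (hok : okPair n k L = true) : tryI s L n ≠ none := by
  intro h
  have := osearch_eq_none_iff.1 h i hi
  rw [he] at this
  simp [hok] at this

lemma actF_some {s n k : ℕ} {L : List (ℕ × ℕ)} (h : actF s L = some (n, k)) :
    n < s ∧ satB n L = false ∧ tryI s L n = some k := by
  obtain ⟨i, hi, h2, _⟩ := osearch_some h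
  by_cases hs : satB i L = true
  · rw [if_pos hs] at h2; simp at h2
  · rw [if_neg hs] at h2
    cases ht : tryI s L i with
    | none => rw [ht] at h2; simp at h2
    | some k' =>
      rw [ht] at h2
      simp only [Option.map_some] at h2
      cases h2
      exact ⟨hi, Bool.not_eq_true _ ▸ by simpa using hs, ht⟩

lemma actF_least {s n : ℕ} {L : List (ℕ × ℕ)} (hn : n < s) (hs : satB n L = false)
    (ht : tryI s L n ≠ none) : ∃ m k, actF s L = some (m, k) ∧ m ≤ n := by
  have hne : actF s L ≠ none := by
    intro h
    have := osearch_eq_none_iff.1 h n hn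
    rw [hs] at this
    simp only [Bool.false_eq_true, if_false] at this
    exact ht (Option.map_eq_none_iff.1 this)
  cases h : actF s L with
  | none => exact absurd h hne
  | some mk =>
    obtain ⟨m, k⟩ := mk
    refine ⟨m, k, rfl, ?_⟩
    obtain ⟨i, hi, h2, h3⟩ := osearch_some h
    have him : i = m := by
      by_cases hsi : satB i L = true
      · rw [if_pos hsi] at h2; simp at h2
      · rw [if_neg hsi] at h2
        cases ht' : tryI s L i with
        | none => rw [ht'] at h2; simp at h2
        | some k' => rw [ht'] at h2; simp at h2; exact h2.1
    by_contra hc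
    push_neg at hc
    rw [him] at h3
    have := h3 n hc
    rw [hs] at this
    simp only [Bool.false_eq_true, if_false] at this
    exact ht (Option.map_eq_none_iff.1 this)

lemma mem_step {s : ℕ} {L : List (ℕ × ℕ)} {q : ℕ × ℕ} :
    q ∈ step s L ↔ (actF s L = none ∧ q ∈ L) ∨
      (∃ n k, actF s L = some (n, k) ∧ (q = (n, k) ∨ (q ∈ L ∧ disjB k q.2 = true))) := by
  cases h : actF s L with
  | none => simp [step, h]
  | some nk =>
    obtain ⟨n, k⟩ := nk
    simp only [step, h, Option.elim, filt_eq, List.mem_cons, List.mem_filter]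
    constructor
    · rintro (rfl | ⟨hq, hd⟩)
      · exact Or.inr ⟨n, k, rfl, Or.inl rfl⟩
      · exact Or.inr ⟨n, k, rfl, Or.inr ⟨hq, by simpa using hd⟩⟩
    · rintro (⟨h', _⟩ | ⟨n', k', h', hq⟩)
      · simp at h'
      · obtain ⟨rfl, rfl⟩ : n = n' ∧ k = k' := by
          have := Option.some.inj h'
          exact ⟨congrArg Prod.fst this, congrArg Prod.snd this⟩
        rcases hq with rfl | ⟨hq, hd⟩
        · exact Or.inl rfl
        · exact Or.inr ⟨hq, by simpa using hd⟩

lemma colOf_find {L : List (ℕ × ℕ)} {x : ℕ} :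
    (L.foldr (fun p acc => if memB x p.2 then some p else acc) none) = L.find? (fun p => memB x p.2) := by
  induction L with
  | nil => rfl
  | cons a l ih =>
    rw [List.find?_cons]
    by_cases h : memB x a.2 <;> simp [h, ih]
/-! ### Invariants -/

def Good (L : List (ℕ × ℕ)) : Prop :=
  (∀ p ∈ L, ∀ y ∈ dl p.2, p.1 < y) ∧
  List.Pairwise (fun p q : ℕ × ℕ => ∀ y ∈ dl p.2, y ∉ dl q.2) L ∧
  (∀ p ∈ L, ∃ j, p.2 ∈ eval (Denumerable.ofNat Code p.1.unpair.1) j)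

lemma good_state : ∀ s, Good (state s) := by
  intro s
  induction s with
  | zero => exact ⟨by simp, by simp, by simp⟩
  | succ s ih =>
    obtain ⟨ih1, ih2, ih3⟩ := ih
    rw [state_succ]
    cases h : actF s (state s) with
    | none => simpa [step, h] using ⟨ih1, ih2, ih3⟩
    | some nk =>
      obtain ⟨n, k⟩ := nk
      obtain ⟨hns, hsat, htry⟩ := actF_some h
      obtain ⟨hok, i, hev⟩ := tryI_some htry
      obtain ⟨hok1, hok2⟩ := okPair_iff.1 hok
      have hfilt : ∀ q ∈ filt k (state s), q ∈ state s ∧ (∀ y ∈ dl k, y ∉ dl q.2) := by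
        intro q hq
        rw [filt_eq, List.mem_filter] at hq
        exact ⟨hq.1, disjB_iff.1 (by simpa using hq.2)⟩
      refine ⟨?_, ?_, ?_⟩
      · intro p hp
        simp only [step, h, Option.elim, List.mem_cons] at hp
        rcases hp with rfl | hp
        · exact hok1
        · exact ih1 p (hfilt p hp).1
      · simp only [step, h, Option.elim]
        refine List.Pairwise.cons ?_ ?_
        · intro q hq
          exact (hfilt q hq).2
        · rw [filt_eq]
          exact List.Pairwise.filter _ ih2
      · intro p hp
        simp only [step, h, Option.elim, List.mem_cons] at hp
        rcases hp with rfl | hp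
        · exact ⟨i, evaln_sound hev⟩
        · exact ih3 p (hfilt p hp).1

def Acts (n s : ℕ) : Prop := ∃ k, actF s (state s) = some (n, k)

lemma persist {s : ℕ} {p : ℕ × ℕ} (hp : p ∈ state s)
    (h : ∀ n k, actF s (state s) = some (n, k) → p.1 < n) : p ∈ state (s + 1) := by
  rw [state_succ]
  rw [mem_step]
  cases hact : actF s (state s) with
  | none => exact Or.inl ⟨rfl, hp⟩
  | some nk =>
    obtain ⟨n, k⟩ := nk
    obtain ⟨_, _, htry⟩ := actF_some hact
    obtain ⟨hok, _⟩ := tryI_some htry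
    obtain ⟨_, hok2⟩ := okPair_iff.1 hok
    exact Or.inr ⟨n, k, rfl, Or.inr ⟨hp, disjB_iff.2 (hok2 p hp (h n k hact))⟩⟩

lemma sat_of_mem {n k s : ℕ} (h : (n, k) ∈ state s) : satB n (state s) = true :=
  satB_iff.2 ⟨(n, k), h, rfl⟩

lemma not_acts_of_sat {n s : ℕ} (h : satB n (state s) = true) : ¬ Acts n s := by
  rintro ⟨k, hk⟩
  obtain ⟨_, hsat, _⟩ := actF_some hk
  rw [h] at hsat
  exact absurd hsat (by simp)

lemma new_entry {s : ℕ} {q : ℕ × ℕ} (h1 : q ∈ state (s + 1)) (h2 : q ∉ state s) :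
    actF s (state s) = some q := by
  rw [state_succ, mem_step] at h1
  rcases h1 with ⟨_, hq⟩ | ⟨n, k, hact, hq⟩
  · exact absurd hq h2
  · rcases hq with rfl | ⟨hq, _⟩
    · exact hact
    · exact absurd hq h2

/-- The priority lemma: eventually no requirement `≤ n` ever acts. -/
lemma no_small_acts : ∀ n : ℕ, ∃ S, ∀ s, S ≤ s → ∀ m ≤ n, ¬ Acts m s := by
  have key : ∀ (n S0 : ℕ), (∀ s, S0 ≤ s → ∀ m < n, ¬ Acts m s) →
      ∃ S, S0 ≤ S ∧ ∀ s, S ≤ s → ∀ m ≤ n, ¬ Acts m s := by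
    intro n S0 h0
    by_cases hA : ∀ s, S0 ≤ s → ¬ Acts n s
    · refine ⟨S0, le_refl _, fun s hs m hm => ?_⟩
      rcases Nat.lt_or_ge m n with hlt | hge
      · exact h0 s hs m hlt
      · have : m = n := le_antisymm hm hge
        subst this
        exact hA s hs
    · push_neg at hA
      obtain ⟨s0, hs0, k, hk⟩ := hA
      have hmem : (n, k) ∈ state (s0 + 1) := by
        rw [state_succ, mem_step]
        exact Or.inr ⟨n, k, hk, Or.inl rfl⟩
      have hpers : ∀ t, s0 + 1 ≤ t → (n, k) ∈ state t := by
        intro t ht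
        induction t, ht using Nat.le_induction with
        | base => exact hmem
        | succ t ht iht =>
          refine persist iht ?_
          intro n' k' hact
          by_contra hc
          push_neg at hc
          rcases Nat.lt_or_ge n' n with hlt | hge
          · exact h0 t (le_trans hs0 (le_trans (Nat.le_succ s0) ht)) n' hlt ⟨k', hact⟩
          · have : n' = n := le_antisymm (by simpa using hc) hge
            subst this
            exact not_acts_of_sat (sat_of_mem iht) ⟨k', hact⟩
      refine ⟨s0 + 1, le_trans hs0 (Nat.le_succ s0), fun s hs m hm => ?_⟩
      rcases Nat.lt_or_ge m n with hlt | hge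
      · exact h0 s (le_trans hs0 (le_trans (Nat.le_succ s0) hs)) m hlt
      · have : m = n := le_antisymm hm hge
        subst this
        exact not_acts_of_sat (sat_of_mem (hpers s hs))
  intro n
  induction n with
  | zero =>
    obtain ⟨S, _, hS⟩ := key 0 0 (by intro s _ m hm; omega)
    exact ⟨S, hS⟩
  | succ n ih =>
    obtain ⟨S0, hS0⟩ := ih
    obtain ⟨S, _, hS⟩ := key (n + 1) S0 (fun s hs m hm => hS0 s hs m (Nat.lt_succ_iff.1 hm))
    exact ⟨S, hS⟩

/-- Entries with small first component are stable after the priority stage. -/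
lemma low_stable {n S : ℕ} (hS : ∀ s, S ≤ s → ∀ m ≤ n, ¬ Acts m s) :
    ∀ s, S ≤ s → ∀ p : ℕ × ℕ, p.1 ≤ n → (p ∈ state s ↔ p ∈ state S) := by
  intro s hs
  induction s, hs using Nat.le_induction with
  | base => intro p _; rfl
  | succ s hs ih =>
    intro p hp
    constructor
    · intro hmem
      by_cases h : p ∈ state s
      · exact (ih p hp).1 h
      · have hact := new_entry hmem h
        exact absurd ⟨p.2, by simpa using hact⟩ (hS s hs p.1 hp)
    · intro hmem
      have h := (ih p hp).2 hmem
      refine persist h ?_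
      intro n' k' hact
      by_contra hc
      push_neg at hc
      exact hS s hs n' (le_trans (by simpa using hc) hp) ⟨k', hact⟩

/-! ### The stage colouring and its limit -/

lemma colOf_eq_of_mem {L : List (ℕ × ℕ)} {x : ℕ} {p : ℕ × ℕ}
    (hpw : List.Pairwise (fun p q : ℕ × ℕ => ∀ y ∈ dl p.2, y ∉ dl q.2) L)
    (hp : p ∈ L) (hx : x ∈ dl p.2) : colOf L x = p.1.unpair.2 := by
  unfold colOf
  rw [colOf_find]
  cases hf : List.find? (fun q => memB x q.2) L with
  | none =>
    exfalso
    exact (List.find?_eq_none.1 hf) p hp (by simpa [memB_iff] using hx)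
  | some q =>
    have hqL := List.mem_of_find?_eq_some hf
    have hqx : x ∈ dl q.2 := memB_iff.1 (List.find?_some (p := fun r : ℕ × ℕ => memB x r.2) hf)
    have hsymm : Symmetric (fun p q : ℕ × ℕ => ∀ y ∈ dl p.2, y ∉ dl q.2) := by
      intro a b hab y hy hy'
      exact hab y hy' hy
    by_cases hpq : p = q
    · subst hpq; simp
    · haveI : Std.Symm (fun p q : ℕ × ℕ => ∀ y ∈ dl p.2, y ∉ dl q.2) := ⟨fun a b h => hsymm h⟩
      exact absurd hqx (hpw.forall hp hqL hpq x hx)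

lemma colOf_eq_zero {L : List (ℕ × ℕ)} {x : ℕ} (h : ∀ p ∈ L, x ∉ dl p.2) : colOf L x = 0 := by
  unfold colOf
  rw [colOf_find, List.find?_eq_none.2 (fun q hq => by simpa [memB_iff] using h q hq)]
  rfl

lemma fc_stable (x : ℕ) : ∃ c N, ∀ s, N ≤ s → fc x s = c := by
  obtain ⟨S, hS⟩ := no_small_acts x
  by_cases hx : ∃ p ∈ state S, x ∈ dl p.2
  · obtain ⟨p, hp, hpx⟩ := hx
    have hp1 : p.1 ≤ x := le_of_lt ((good_state S).1 p hp x hpx)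
    refine ⟨p.1.unpair.2, S, fun s hs => ?_⟩
    have hmem : p ∈ state s := (low_stable hS s hs p hp1).2 hp
    exact colOf_eq_of_mem (good_state s).2.1 hmem hpx
  · refine ⟨0, S, fun s hs => ?_⟩
    refine colOf_eq_zero (fun p hp hpx => ?_)
    have hp1 : p.1 ≤ x := le_of_lt ((good_state s).1 p hp x hpx)
    exact hx ⟨p, (low_stable hS s hs p hp1).1 hp, hpx⟩

noncomputable def limf (x : ℕ) : ℕ := (fc_stable x).choose

lemma limf_spec (x : ℕ) : ∃ N, ∀ s, N ≤ s → fc x s = limf x := (fc_stable x).choose_spec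
/-! ### Hyperimmunity of the limit classes -/

def usedD (L : List (ℕ × ℕ)) : Finset ℕ := L.foldr (fun p acc => D p.2 ∪ acc) ∅

lemma mem_usedD {L : List (ℕ × ℕ)} {x : ℕ} : x ∈ usedD L ↔ ∃ p ∈ L, x ∈ D p.2 := by
  unfold usedD
  induction L with
  | nil => simp
  | cons a l ih => simp [ih]

lemma main_hyper (i : ℕ) (g : ℕ → ℕ) (hg : Nat.Partrec (g : ℕ →. ℕ))
    (hdisj : ∀ a b, a ≠ b → Disjoint (D (g a)) (D (g b))) :
    ∃ j, ∀ x ∈ D (g j), limf x = i := by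
  obtain ⟨c, hc⟩ := exists_code.1 hg
  set e : ℕ := Encodable.encode c with he
  set n : ℕ := Nat.pair e i with hn
  have hcode : Denumerable.ofNat Code n.unpair.1 = c := by
    rw [hn, Nat.unpair_pair]
    exact Denumerable.ofNat_encode c
  obtain ⟨S, hS⟩ := no_small_acts n
  by_cases hsat : ∃ s, S ≤ s ∧ satB n (state s) = true
  · -- the requirement is satisfied: its entry gives the desired member
    obtain ⟨s, hs, hsb⟩ := hsat
    obtain ⟨p, hp, hp1⟩ := satB_iff.1 hsb
    obtain ⟨m, k⟩ := p
    simp only at hp1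
    subst hp1
    -- the entry (n, k) persists forever
    have hpers : ∀ t, s ≤ t → (n, k) ∈ state t := by
      intro t ht
      induction t, ht using Nat.le_induction with
      | base => exact hp
      | succ t ht iht =>
        refine persist iht ?_
        intro n' k' hact
        by_contra hcon
        push_neg at hcon
        have hn'n : n' ≤ n := by simpa using hcon
        exact hS t (le_trans hs ht) n' hn'n ⟨k', hact⟩
    -- the committed code k is a value of g
    obtain ⟨j, hj⟩ := (good_state s).2.2 (n, k) hp
    rw [hcode, hc] at hj
    have hkj : k = g j := by simpa [Part.mem_some_iff] using hj
    refine ⟨j, fun x hx => ?_⟩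
    rw [← hkj] at hx
    have hxdl : x ∈ dl k := mem_D_iff.1 hx
    -- compute the limit
    obtain ⟨N, hN⟩ := limf_spec x
    set t := max N s with htdef
    have h1 : fc x t = limf x := hN t (le_max_left _ _)
    have h2 : fc x t = i := by
      have := colOf_eq_of_mem (good_state t).2.1 (hpers t (le_max_right _ _)) hxdl
      simpa [fc, hn] using this
    rw [← h1, h2]
  · -- the requirement is never satisfied after S: we derive a contradiction
    exfalso
    push_neg at hsat
    -- the finite set of numbers that are "used" by stage S or ≤ n
    set V : Finset ℕ := Finset.range (n + 1) ∪ usedD (state S) with hV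
    set Bad : Set ℕ := {j | ∃ x ∈ D (g j), x ∈ V} with hBad
    have hBadFin : Bad.Finite := by
      classical
      have hchoice : ∀ j ∈ Bad, ∃ x, x ∈ D (g j) ∧ x ∈ V := fun j hj => by
        obtain ⟨x, hx1, hx2⟩ := hj
        exact ⟨x, hx1, hx2⟩
      choose w hw1 hw2 using hchoice
      apply Set.Finite.of_finite_image (f := fun j => if h : j ∈ Bad then w j h else 0)
      · apply Set.Finite.subset (Set.finite_Icc 0 (V.sup id))
        rintro y ⟨j, hj, rfl⟩
        simp only [dif_pos hj]
        exact ⟨Nat.zero_le _, Finset.le_sup (f := id) (hw2 j hj)⟩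
      · intro a ha b hb hab
        simp only [dif_pos ha, dif_pos hb] at hab
        by_contra hne
        have hd := hdisj a b hne
        exact Finset.disjoint_left.1 hd (hw1 a ha) (hab ▸ hw1 b hb)
    obtain ⟨j, hj⟩ := hBadFin.infinite_compl.nonempty
    have hjgood : ∀ x ∈ D (g j), x ∉ V := by
      intro x hx hxV
      exact hj ⟨x, hx, hxV⟩
    -- find a stage where evaln converges on j
    have hgj : (g j : ℕ) ∈ eval c j := by rw [hc]; simp
    obtain ⟨t, ht⟩ := evaln_complete.1 hgj
    set s : ℕ := max (max S (n + 1)) t with hsdef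
    have hsS : S ≤ s := le_trans (le_max_left _ _) (le_max_left _ _)
    have hsn : n + 1 ≤ s := le_trans (le_max_right _ _) (le_max_left _ _)
    have hev : g j ∈ evaln s c j := evaln_mono (le_max_right _ _) ht
    have hjs : j < s := evaln_bound hev
    -- okPair holds
    have hok : okPair n (g j) (state s) = true := by
      rw [okPair_iff]
      constructor
      · intro x hx
        have := hjgood x (mem_D_iff.2 hx)
        by_contra hcon
        push_neg at hcon
        exact this (by simp [hV, Finset.mem_union, Finset.mem_range]; left; omega)
      · intro p hp hpn x hx hx2
        have hpS : p ∈ state S := (low_stable hS s hsS p (le_of_lt hpn)).1 hp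
        exact hjgood x (mem_D_iff.2 hx)
          (by simp only [hV, Finset.mem_union]; right;
              exact mem_usedD.2 ⟨p, hpS, mem_D_iff.2 hx2⟩)
    have hsatb : satB n (state s) = false := by
      have := hsat s hsS
      simpa using this
    have htry : tryI s (state s) n ≠ none := by
      apply tryI_ne_none hjs (k := g j) _ hok
      rw [hcode]
      exact hev
    obtain ⟨m, k, hact, hmn⟩ := actF_least (by omega) hsatb htry
    exact hS s hsS m hmn ⟨k, hact⟩
/-! ### Computability of the construction -/

lemma raise'_foldl : ∀ (l : List ℕ) (n : ℕ) (acc : List ℕ),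
    (l.foldl (fun p m => (m + p.1 + 1, p.2 ++ [m + p.1])) (n, acc)).2 =
      acc ++ Denumerable.raise' l n := by
  intro l
  induction l with
  | nil => intro n acc; simp [Denumerable.raise']
  | cons m l ih =>
    intro n acc
    simp only [List.foldl_cons, Denumerable.raise']
    rw [ih]
    simp

open Primrec in
lemma dl_primrec : Primrec dl := by
  have hF : Primrec₂ (fun (_ : ℕ) (p : (ℕ × List ℕ) × ℕ) =>
      ((p.2 + p.1.1 + 1, p.1.2 ++ [p.2 + p.1.1]) : ℕ × List ℕ)) := by
    refine Primrec.to₂ (Primrec.pair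
      (f := fun p : ℕ × ((ℕ × List ℕ) × ℕ) => p.2.2 + p.2.1.1 + 1)
      (g := fun p : ℕ × ((ℕ × List ℕ) × ℕ) => p.2.1.2 ++ [p.2.2 + p.2.1.1]) ?_ ?_)
    · exact succ.comp (nat_add.comp (snd.comp snd)
        (fst.comp (fst.comp snd)))
    · exact list_append.comp (snd.comp (fst.comp snd))
        (list_cons.comp (nat_add.comp (snd.comp snd)
          (fst.comp (fst.comp snd))) (const ([] : List ℕ)))
  have := Primrec.snd.comp
    (Primrec.list_foldl (Primrec.ofNat (List ℕ)) (Primrec.const ((0, []) : ℕ × List ℕ)) hF)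
  refine this.of_eq ?_
  intro k
  simp only []
  rw [raise'_foldl]
  simp [dl]

lemma boolPred {α : Type} [Primcodable α] {b : α → Bool} (hb : Primrec b) :
    PrimrecPred fun a => b a = true :=
  Primrec.eq.comp hb (Primrec.const true)

open Primrec in
lemma memB_primrec : Primrec₂ memB := by
  have := Primrec.list_foldr (α := ℕ × ℕ) (β := ℕ) (σ := Bool)
    (f := fun p => dl p.2) (g := fun _ => false)
    (h := fun p q => (p.1 == q.1) || q.2)
    (dl_primrec.comp Primrec.snd) (const false)
    (Primrec.to₂ ((Primrec.dom_bool₂ (· || ·)).comp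
      (Primrec.beq.comp (fst.comp fst) (fst.comp snd))
      (snd.comp snd)))
  exact this.of_eq (fun p => rfl)

open Primrec in
lemma disjB_primrec : Primrec₂ disjB := by
  have := Primrec.list_foldr (α := ℕ × ℕ) (β := ℕ) (σ := Bool)
    (f := fun p => dl p.1) (g := fun _ => true)
    (h := fun p q => (!(memB q.1 p.2)) && q.2)
    (dl_primrec.comp Primrec.fst) (const true)
    (Primrec.to₂ ((Primrec.dom_bool₂ (· && ·)).comp
      ((Primrec.dom_bool (!·)).comp
        (memB_primrec.comp (fst.comp snd) (snd.comp fst)))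
      (snd.comp snd)))
  exact this.of_eq (fun p => rfl)

open Primrec in
lemma okPair_primrec : Primrec (fun a : (ℕ × ℕ) × List (ℕ × ℕ) => okPair a.1.1 a.1.2 a.2) := by
  have h1 : Primrec (fun a : (ℕ × ℕ) × List (ℕ × ℕ) =>
      allB (fun x => decide (a.1.1 < x)) a.1.2) := by
    have := Primrec.list_foldr (α := (ℕ × ℕ) × List (ℕ × ℕ)) (β := ℕ) (σ := Bool)
      (f := fun a => dl a.1.2) (g := fun _ => true)
      (h := fun a q => (decide (a.1.1 < q.1)) && q.2)
      (dl_primrec.comp (snd.comp fst)) (const true)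
      (Primrec.to₂ ((Primrec.dom_bool₂ (· && ·)).comp
        (nat_lt.comp (fst.comp (fst.comp fst)) (fst.comp snd)).decide
        (snd.comp snd)))
    exact this.of_eq (fun a => rfl)
  have h2 : Primrec (fun a : (ℕ × ℕ) × List (ℕ × ℕ) =>
      a.2.foldr (fun p acc => ((!decide (p.1 < a.1.1)) || disjB a.1.2 p.2) && acc) true) := by
    have := Primrec.list_foldr (α := (ℕ × ℕ) × List (ℕ × ℕ)) (β := ℕ × ℕ) (σ := Bool)
      (f := fun a => a.2) (g := fun _ => true)
      (h := fun a q => ((!decide (q.1.1 < a.1.1)) || disjB a.1.2 q.1.2) && q.2)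
      Primrec.snd (const true)
      (Primrec.to₂ ((Primrec.dom_bool₂ (· && ·)).comp
        ((Primrec.dom_bool₂ (· || ·)).comp
          ((Primrec.dom_bool (!·)).comp
            (nat_lt.comp (fst.comp (fst.comp snd))
              (fst.comp (fst.comp fst))).decide)
          (disjB_primrec.comp (snd.comp (fst.comp fst))
            (snd.comp (fst.comp snd))))
        (snd.comp snd)))
    exact this.of_eq (fun a => rfl)
  exact ((Primrec.dom_bool₂ (· && ·)).comp h1 h2).of_eq (fun a => rfl)

open Primrec in
lemma satB_primrec : Primrec₂ satB := by
  have := Primrec.list_foldr (α := ℕ × List (ℕ × ℕ)) (β := ℕ × ℕ) (σ := Bool)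
    (f := fun a => a.2) (g := fun _ => false)
    (h := fun a q => (q.1.1 == a.1) || q.2)
    Primrec.snd (const false)
    (Primrec.to₂ ((Primrec.dom_bool₂ (· || ·)).comp
      (Primrec.beq.comp (fst.comp (fst.comp snd)) (fst.comp fst))
      (snd.comp snd)))
  exact this.of_eq (fun a => rfl)

set_option maxHeartbeats 1000000 in
open Primrec in
lemma tryI_primrec : Primrec (fun a : (ℕ × List (ℕ × ℕ)) × ℕ => tryI a.1.1 a.1.2 a.2) := by
  have hev : Primrec (fun p : ((ℕ × List (ℕ × ℕ)) × ℕ) × (ℕ × Option ℕ) =>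
      Nat.Partrec.Code.evaln p.1.1.1 (Denumerable.ofNat Code p.1.2.unpair.1) p.2.1) :=
    Nat.Partrec.Code.primrec_evaln.comp
      (Primrec.pair
        (Primrec.pair (fst.comp (fst.comp fst))
          ((Primrec.ofNat Code).comp
            (fst.comp (Primrec.unpair.comp (snd.comp fst)))))
        (fst.comp snd))
  have hif : Primrec₂ (fun (p : ((ℕ × List (ℕ × ℕ)) × ℕ) × (ℕ × Option ℕ)) (k : ℕ) =>
      if okPair p.1.2 k p.1.1.2 then some k else none) := by
    have hpred : PrimrecPred (fun q : (((ℕ × List (ℕ × ℕ)) × ℕ) × (ℕ × Option ℕ)) × ℕ =>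
        okPair q.1.1.2 q.2 q.1.1.1.2 = true) :=
      boolPred (okPair_primrec.comp (Primrec.pair (Primrec.pair
        (snd.comp (fst.comp fst)) snd) (snd.comp (fst.comp (fst.comp fst)))))
    exact Primrec.to₂ (Primrec.ite hpred (option_some.comp snd) (const (none : Option ℕ)))
  have hX : Primrec (fun p : ((ℕ × List (ℕ × ℕ)) × ℕ) × (ℕ × Option ℕ) =>
      (p.2.2 <|> (Nat.Partrec.Code.evaln p.1.1.1 (Denumerable.ofNat Code p.1.2.unpair.1) p.2.1).bind
        (fun k => if okPair p.1.2 k p.1.1.2 then some k else none))) :=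
    Primrec.option_orElse.comp (snd.comp snd) (Primrec.option_bind hev hif)
  have := Primrec.nat_rec' (f := fun a : (ℕ × List (ℕ × ℕ)) × ℕ => a.1.1)
    (g := fun _ => (none : Option ℕ))
    (fst.comp fst) (const (none : Option ℕ)) hX.to₂
  exact this.of_eq (fun a => rfl)

set_option maxHeartbeats 1000000 in
open Primrec in
lemma actF_primrec : Primrec₂ actF := by
  have htry : Primrec (fun p : (ℕ × List (ℕ × ℕ)) × (ℕ × Option (ℕ × ℕ)) =>
      tryI p.1.1 p.1.2 p.2.1) :=
    tryI_primrec.comp (Primrec.pair (Primrec.pair (fst.comp fst) (snd.comp fst))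
      (fst.comp snd))
  have hmap : Primrec (fun p : (ℕ × List (ℕ × ℕ)) × (ℕ × Option (ℕ × ℕ)) =>
      (tryI p.1.1 p.1.2 p.2.1).map (fun k => (p.2.1, k))) :=
    Primrec.option_map htry (Primrec.to₂ (Primrec.pair (fst.comp (snd.comp fst)) snd))
  have hbody : Primrec (fun p : (ℕ × List (ℕ × ℕ)) × (ℕ × Option (ℕ × ℕ)) =>
      (p.2.2 <|> (if satB p.2.1 p.1.2 then none
        else (tryI p.1.1 p.1.2 p.2.1).map (fun k => (p.2.1, k))))) := by
    refine Primrec.option_orElse.comp (snd.comp snd) ?_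
    exact Primrec.ite (boolPred (satB_primrec.comp (fst.comp snd) (snd.comp fst)))
      (const (none : Option (ℕ × ℕ))) hmap
  have := Primrec.nat_rec' (f := fun a : ℕ × List (ℕ × ℕ) => a.1)
    (g := fun _ => (none : Option (ℕ × ℕ)))
    Primrec.fst (const (none : Option (ℕ × ℕ))) hbody.to₂
  exact this.of_eq (fun a => rfl)

open Primrec in
lemma filt_primrec : Primrec₂ filt := by
  have := Primrec.list_foldr (α := ℕ × List (ℕ × ℕ)) (β := ℕ × ℕ) (σ := List (ℕ × ℕ))
    (f := fun a => a.2) (g := fun _ => [])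
    (h := fun a q => if disjB a.1 q.1.2 then q.1 :: q.2 else q.2)
    Primrec.snd (const ([] : List (ℕ × ℕ)))
    (Primrec.to₂ (Primrec.ite
      (boolPred (disjB_primrec.comp (fst.comp fst) (snd.comp (fst.comp snd))))
      (list_cons.comp (fst.comp snd) (snd.comp snd))
      (snd.comp snd)))
  exact this.of_eq (fun a => rfl)

open Primrec in
lemma step_primrec : Primrec₂ step := by
  have hsome : Primrec₂ (fun (a : ℕ × List (ℕ × ℕ)) (nk : ℕ × ℕ) =>
      nk :: filt nk.2 a.2) :=
    Primrec.to₂ (list_cons.comp snd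
      (filt_primrec.comp (snd.comp snd) (snd.comp fst)))
  have := Primrec.option_casesOn (actF_primrec.comp Primrec.fst Primrec.snd)
    Primrec.snd hsome
  have h2 : Primrec (fun a : ℕ × List (ℕ × ℕ) => step a.1 a.2) := by
    refine this.of_eq ?_
    intro a
    unfold step
    cases actF a.1 a.2 <;> rfl
  exact h2

open Primrec in
lemma state_primrec : Primrec state := by
  have := Primrec.nat_rec' (f := fun a : ℕ => a)
    (g := fun _ => ([] : List (ℕ × ℕ)))
    (h := fun _ p => step p.1 p.2)
    Primrec.id (const [])
    (Primrec.to₂ (step_primrec.comp (fst.comp snd) (snd.comp snd)))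
  exact this.of_eq (fun a => rfl)

open Primrec in
lemma colOf_primrec : Primrec₂ colOf := by
  have hfold : Primrec (fun a : List (ℕ × ℕ) × ℕ =>
      a.1.foldr (fun p acc => if memB a.2 p.2 then some p else acc) none) := by
    have := Primrec.list_foldr (α := List (ℕ × ℕ) × ℕ) (β := ℕ × ℕ) (σ := Option (ℕ × ℕ))
      (f := fun a => a.1) (g := fun _ => none)
      (h := fun a q => if memB a.2 q.1.2 then some q.1 else q.2)
      Primrec.fst (const none)
      (Primrec.to₂ (Primrec.ite
        (boolPred (memB_primrec.comp (snd.comp fst) (snd.comp (fst.comp snd))))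
        (option_some.comp (fst.comp snd))
        (snd.comp snd)))
    exact this.of_eq (fun a => rfl)
  have hmap : Primrec (fun a : List (ℕ × ℕ) × ℕ =>
      (a.1.foldr (fun p acc => if memB a.2 p.2 then some p else acc) none).map
        (fun p => p.1.unpair.2)) :=
    Primrec.option_map hfold
      (Primrec.to₂ (snd.comp (Primrec.unpair.comp (fst.comp snd))))
  exact Primrec.to₂ ((Primrec.option_getD.comp hmap (const 0)).of_eq (fun a => rfl))

open Primrec in
lemma fc_primrec : Primrec (fun k : ℕ => fc k.unpair.1 k.unpair.2) := by
  refine (colOf_primrec.comp (state_primrec.comp (snd.comp Primrec.unpair))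
    (fst.comp Primrec.unpair)).of_eq (fun k => rfl)
/-! ### Relativized computability -/

lemma recursiveIn_of_partrec {O : ℕ → ℕ} {f : ℕ →. ℕ} (h : Nat.Partrec f) :
    OracleRecursiveIn O f := by
  induction h with
  | zero => exact .zero
  | succ => exact .succ
  | left => exact .left
  | right => exact .right
  | pair _ _ ih1 ih2 => exact .pair ih1 ih2
  | comp _ _ ih1 ih2 => exact .comp ih1 ih2
  | prec _ _ ih1 ih2 => exact .prec ih1 ih2
  | rfind _ ih => exact .rfind ih

lemma chi_empty : chi ∅ = fun _ => 0 := by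
  funext n
  simp [chi]

lemma partrec_of_recursiveIn {f : ℕ →. ℕ} (h : OracleRecursiveIn (chi ∅) f) : Nat.Partrec f := by
  induction h with
  | zero => exact .zero
  | succ => exact .succ
  | left => exact .left
  | right => exact .right
  | oracle =>
    have : ((chi ∅ : ℕ → ℕ) : ℕ →. ℕ) = pure 0 := by
      funext n
      simp [chi_empty]
      rfl
    rw [this]
    exact .zero
  | pair _ _ ih1 ih2 => exact .pair ih1 ih2
  | comp _ _ ih1 ih2 => exact .comp ih1 ih2
  | prec _ _ ih1 ih2 => exact .prec ih1 ih2
  | rfind _ ih => exact .rfind ih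

lemma recIn_of_primrec {O : ℕ → ℕ} {f : ℕ → ℕ} (h : Primrec f) : OracleRecursiveIn O f :=
  recursiveIn_of_partrec (Nat.Partrec.of_primrec (Primrec.nat_iff.1 h))

lemma recIn_part_of_eq {O : ℕ → ℕ} {f g : ℕ →. ℕ} (h : OracleRecursiveIn O f)
    (e : ∀ n, f n = g n) : OracleRecursiveIn O g := (funext e : f = g) ▸ h

lemma recIn_totalComp {O : ℕ → ℕ} {f g : ℕ → ℕ} (hf : OracleRecursiveIn O f)
    (hg : OracleRecursiveIn O g) : OracleRecursiveIn O ↑(fun n => f (g n)) := by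
  apply recIn_part_of_eq (OracleRecursiveIn.comp hf hg)
  intro n
  exact Part.bind_some (g n) (fun x => Part.some (f x))

lemma recIn_totalPair {O : ℕ → ℕ} {f g : ℕ → ℕ} (hf : OracleRecursiveIn O f)
    (hg : OracleRecursiveIn O g) : OracleRecursiveIn O ↑(fun n => Nat.pair (f n) (g n)) := by
  apply recIn_part_of_eq (OracleRecursiveIn.pair hf hg)
  intro n
  simp [PFun.coe_val, Seq.seq]

/-! ### The H-computable singleton array -/

section Harr

variable (H : Set ℕ) (hH : H.Infinite)

include hH in
lemma exists_wait (a : ℕ) : ∃ t, a + t ∈ H := by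
  obtain ⟨b, hb, hab⟩ := hH.exists_gt a
  exact ⟨b - a, by rwa [Nat.add_sub_cancel' (le_of_lt hab)]⟩

open Classical in
noncomputable def dwait (a : ℕ) : ℕ := Nat.find (exists_wait H hH a)

lemma dwait_mem (a : ℕ) : a + dwait H hH a ∈ H := by
  classical
  exact Nat.find_spec (exists_wait H hH a)

lemma dwait_min {a t : ℕ} (h : t < dwait H hH a) : a + t ∉ H := by
  classical
  exact Nat.find_min (exists_wait H hH a) h

noncomputable def qf : ℕ → ℕ := fun p => 1 - chi H (p.unpair.1 + p.unpair.2)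

lemma qf_eq_zero_iff {a t : ℕ} : qf H (Nat.pair a t) = 0 ↔ a + t ∈ H := by
  classical
  simp only [qf, Nat.unpair_pair, chi]
  by_cases h : a + t ∈ H <;> simp [h]

lemma qf_recIn : OracleRecursiveIn (chi H) (qf H) := by
  have h1 : OracleRecursiveIn (chi H) ↑(fun p : ℕ => p.unpair.1 + p.unpair.2) :=
    recIn_of_primrec (Primrec.nat_add.comp
      (Primrec.fst.comp Primrec.unpair) (Primrec.snd.comp Primrec.unpair))
  have h2 : OracleRecursiveIn (chi H) ↑(fun z : ℕ => 1 - z) :=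
    recIn_of_primrec (Primrec.nat_sub.comp (Primrec.const 1) Primrec.id)
  apply recIn_part_of_eq (recIn_totalComp h2 (recIn_totalComp OracleRecursiveIn.oracle h1))
  intro n
  rfl

lemma dwait_recIn : OracleRecursiveIn (chi H) ↑(dwait H hH) := by
  have hR := OracleRecursiveIn.rfind (O := chi H) (qf_recIn H)
  apply recIn_part_of_eq hR
  intro a
  have h1 : (↑(dwait H hH) : ℕ →. ℕ) a = Part.some (dwait H hH a) := rfl
  rw [h1, Part.eq_some_iff]
  apply Nat.mem_rfind.2
  constructor
  · have h0 : qf H (Nat.pair a (dwait H hH a)) = 0 := (qf_eq_zero_iff H).2 (dwait_mem H hH a)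
    simp [PFun.coe_val, h0]
  · intro m hm
    have h0 : qf H (Nat.pair a m) ≠ 0 := fun hq => dwait_min H hH hm ((qf_eq_zero_iff H).1 hq)
    simp [PFun.coe_val, h0]

noncomputable def nxt (b : ℕ) : ℕ := b + dwait H hH b

lemma nxt_mem (b : ℕ) : nxt H hH b ∈ H := dwait_mem H hH b

lemma nxt_ge (b : ℕ) : b ≤ nxt H hH b := Nat.le_add_right _ _

lemma nxt_recIn : OracleRecursiveIn (chi H) ↑(nxt H hH) := by
  have h1 : OracleRecursiveIn (chi H) ↑(fun p : ℕ => p.unpair.1 + p.unpair.2) :=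
    recIn_of_primrec (Primrec.nat_add.comp
      (Primrec.fst.comp Primrec.unpair) (Primrec.snd.comp Primrec.unpair))
  have h2 : OracleRecursiveIn (chi H) ↑(fun a : ℕ => Nat.pair a (dwait H hH a)) :=
    recIn_totalPair (recIn_of_primrec Primrec.id) (dwait_recIn H hH)
  apply recIn_part_of_eq (recIn_totalComp h1 h2)
  intro a
  simp [PFun.coe_val, nxt, Nat.unpair_pair]

noncomputable def hseq : ℕ → ℕ := fun i =>
  Nat.rec (nxt H hH 0) (fun _ prev => nxt H hH (prev + 1)) i

lemma hseq_mem (i : ℕ) : hseq H hH i ∈ H := by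
  cases i with
  | zero => exact nxt_mem H hH 0
  | succ i => exact nxt_mem H hH _

lemma hseq_strictMono : StrictMono (hseq H hH) := by
  have h : ∀ i, hseq H hH i < hseq H hH (i + 1) := by
    intro i
    have := nxt_ge H hH (hseq H hH i + 1)
    calc hseq H hH i < hseq H hH i + 1 := Nat.lt_succ_self _
    _ ≤ nxt H hH (hseq H hH i + 1) := this
  exact strictMono_nat_of_lt_succ h

lemma hseq_recIn : OracleRecursiveIn (chi H) ↑(hseq H hH) := by
  have hg : OracleRecursiveIn (chi H) ↑(fun p : ℕ => nxt H hH (p.unpair.2.unpair.2 + 1)) := by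
    refine recIn_totalComp (nxt_recIn H hH) ?_
    exact recIn_of_primrec (Primrec.succ.comp (Primrec.snd.comp
      (Primrec.unpair.comp (Primrec.snd.comp Primrec.unpair))))
  have hf : OracleRecursiveIn (chi H) ↑(fun _ : ℕ => nxt H hH 0) :=
    recIn_of_primrec (Primrec.const _)
  have hprec := OracleRecursiveIn.prec hf hg
  have key : ∀ (n a : ℕ), (Nat.rec ((↑(fun _ : ℕ => nxt H hH 0) : ℕ →. ℕ) a)
      (fun y IH => IH >>= fun i =>
        (↑(fun p : ℕ => nxt H hH (p.unpair.2.unpair.2 + 1)) : ℕ →. ℕ)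
          (Nat.pair a (Nat.pair y i))) n : Part ℕ) = Part.some (hseq H hH n) := by
    intro n a
    induction n with
    | zero => rfl
    | succ n ih =>
      show (Nat.rec _ _ n : Part ℕ).bind _ = _
      rw [ih]
      simp [PFun.coe_val, Part.bind_some, Nat.unpair_pair, hseq]
  have h2 : OracleRecursiveIn (chi H) ↑(fun m : ℕ => hseq H hH m.unpair.2) := by
    apply recIn_part_of_eq hprec
    intro m
    show (Nat.rec _ _ m.unpair.2 : Part ℕ) = _
    rw [key m.unpair.2 m.unpair.1]
    rfl
  apply recIn_part_of_eq (recIn_totalComp h2 (recIn_of_primrec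
    (Primrec₂.natPair.comp (Primrec.const 0) Primrec.id)))
  intro i
  simp [PFun.coe_val, Nat.unpair_pair]

noncomputable def harr : ℕ → ℕ := fun i => Nat.pair (hseq H hH i) 0 + 1

lemma harr_recIn : OracleRecursiveIn (chi H) ↑(harr H hH) := by
  have := recIn_totalComp (recIn_of_primrec
    (Primrec.succ.comp (Primrec₂.natPair.comp Primrec.id (Primrec.const 0))))
    (hseq_recIn H hH)
  exact this

lemma D_harr (i : ℕ) : D (harr H hH i) = {hseq H hH i} := D_singleton _

end Harr

end Stmt2

/-- There is a computable stable coloring `f : [ℕ]² → ℕ` (represented by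
`f x s` for `x < s`, with limit function `l`) such that every
`B i = {x | lim_s f(x,s) ≠ i}` is hyperimmune; consequently every infinite
`f`-thin set `H` is contained in some `B i`, and that `B i` is not
`H`-hyperimmune. -/
theorem stmt2 :
    ∃ (f : ℕ → ℕ → ℕ) (l : ℕ → ℕ),
      FunComputableIn ∅ (fun k => f k.unpair.1 k.unpair.2) ∧
      (∀ x : ℕ, ∀ᶠ s in Filter.atTop, f x s = l x) ∧
      (∀ i : ℕ, Hyperimmune ∅ {x | l x ≠ i}) ∧
      (∀ H : Set ℕ, H.Infinite →
        (∃ c : ℕ, ∀ x ∈ H, ∀ y ∈ H, x < y → f x y ≠ c) →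
        ∃ i : ℕ, H ⊆ {x | l x ≠ i} ∧ ¬ Hyperimmune H {x | l x ≠ i}) := by
  classical
  refine ⟨Stmt2.fc, Stmt2.limf, ?_, ?_, ?_, ?_⟩
  · -- computability
    exact Stmt2.recursiveIn_of_partrec
      (Nat.Partrec.of_primrec (Primrec.nat_iff.1 Stmt2.fc_primrec))
  · -- stability
    intro x
    obtain ⟨N, hN⟩ := Stmt2.limf_spec x
    exact Filter.eventually_atTop.2 ⟨N, hN⟩
  · -- hyperimmunity
    intro i g hg hdisj
    have hpart : Nat.Partrec (g : ℕ →. ℕ) := Stmt2.partrec_of_recursiveIn hg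
    obtain ⟨j, hj⟩ := Stmt2.main_hyper i g hpart hdisj
    exact ⟨j, fun x hx hxB => hxB (hj x hx)⟩
  · -- thin sets
    intro H hHinf ⟨c, hc⟩
    have hsub : H ⊆ {x | Stmt2.limf x ≠ c} := by
      intro x hx
      obtain ⟨N, hN⟩ := Stmt2.limf_spec x
      obtain ⟨y, hyH, hy⟩ := hHinf.exists_gt (max x N)
      have h1 : Stmt2.fc x y = Stmt2.limf x := hN y (le_of_lt (lt_of_le_of_lt (le_max_right x N) hy))
      have h2 : Stmt2.fc x y ≠ c := hc x hx y hyH (lt_of_le_of_lt (le_max_left x N) hy)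
      intro hlc
      exact h2 (h1.trans hlc)
    refine ⟨c, hsub, ?_⟩
    intro hyp
    have hdj : ∀ a b, a ≠ b → Disjoint (D (Stmt2.harr H hHinf a)) (D (Stmt2.harr H hHinf b)) := by
      intro a b hab
      rw [Stmt2.D_harr, Stmt2.D_harr, Finset.disjoint_singleton]
      exact fun h => hab ((Stmt2.hseq_strictMono H hHinf).injective h)
    obtain ⟨i0, hi0⟩ := hyp (Stmt2.harr H hHinf) (Stmt2.harr_recIn H hHinf) hdj
    have hx : Stmt2.hseq H hHinf i0 ∈ D (Stmt2.harr H hHinf i0) := by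
      rw [Stmt2.D_harr]
      exact Finset.mem_singleton_self _
    exact hi0 _ hx (hsub (Stmt2.hseq_mem H hHinf i0))
end

section
/- Fix n ≥ 1, a set Z, Z-hyperimmune sets B₀, …, B_{n−1}, and a non-trivial partition A₀ ∪ … ∪ A_n = ℕ. For every condition (F, X) and every p ∈ ℕ, there exist a condition (E, Y) extending (F, X) and integers m₀, …, m_n > p such that m_i ∈ E \ A_i for each i ≤ n. -/
/-- A Mathias condition `(F, X)`: `F` finite, `X` infinite and `max F < min X`. -/
def MathiasCond (F : Finset ℕ) (X : Set ℕ) : Prop :=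
  X.Infinite ∧ ∀ a ∈ F, ∀ b ∈ X, a < b

/-- `(E, Y)` extends `(F, X)`. -/
def MathiasExtends (E : Finset ℕ) (Y : Set ℕ) (F : Finset ℕ) (X : Set ℕ) : Prop :=
  F ⊆ E ∧ Y ⊆ X ∧ ↑(E \ F) ⊆ X

/-- A set `G` satisfies the Mathias condition `(F, X)`. -/
def SatisfiesCond (G : Set ℕ) (F : Finset ℕ) (X : Set ℕ) : Prop :=
  ↑F ⊆ G ∧ G ⊆ ↑F ∪ X

/-- The partition `A 0 ∪ … ∪ A n = ℕ` is non-trivial (relative to `Z` and the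
`B j`'s): there is no infinite set `H` avoiding some part `A i` such that every
`B j` is `(H ⊕ Z)`-hyperimmune. -/
def NonTrivial (n : ℕ) (Z : Set ℕ) (B : Fin n → Set ℕ)
    (A : Fin (n + 1) → Set ℕ) : Prop :=
  ¬ ∃ H : Set ℕ, H.Infinite ∧ (∃ i : Fin (n + 1), H ∩ A i = ∅) ∧
      ∀ j, Hyperimmune (join H Z) (B j)

/-- A condition: a Mathias condition `(F, X)` whose reservoir preserves all the
hyperimmunities. -/
def PCond (n : ℕ) (Z : Set ℕ) (B : Fin n → Set ℕ)
    (F : Finset ℕ) (X : Set ℕ) : Prop :=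
  MathiasCond F X ∧ ∀ j, Hyperimmune (join X Z) (B j)

theorem OracleRecursiveIn.of_eq' {O : ℕ → ℕ} {f g : ℕ →. ℕ} (h : OracleRecursiveIn O f)
    (e : ∀ n, f n = g n) : OracleRecursiveIn O g := (funext e : f = g) ▸ h

theorem OracleRecursiveIn.trans' {O O' : ℕ → ℕ} (hO' : OracleRecursiveIn O ↑O')
    {f : ℕ →. ℕ} (hf : OracleRecursiveIn O' f) : OracleRecursiveIn O f := by
  induction hf with
  | zero => exact .zero
  | succ => exact .succ
  | left => exact .left
  | right => exact .right
  | oracle => exact hO'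
  | pair _ _ ih1 ih2 => exact .pair ih1 ih2
  | comp _ _ ih1 ih2 => exact .comp ih1 ih2
  | prec _ _ ih1 ih2 => exact .prec ih1 ih2
  | rfind _ ih => exact .rfind ih

theorem OracleRecursiveIn.of_partrec_s15 {O : ℕ → ℕ} {f : ℕ →. ℕ} (hf : Nat.Partrec f) :
    OracleRecursiveIn O f := by
  induction hf with
  | zero => exact .zero
  | succ => exact .succ
  | left => exact .left
  | right => exact .right
  | pair _ _ ih1 ih2 => exact .pair ih1 ih2
  | comp _ _ ih1 ih2 => exact .comp ih1 ih2
  | prec _ _ ih1 ih2 => exact .prec ih1 ih2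
  | rfind _ ih => exact .rfind ih

open Classical in
theorem primrecPred_mem_finset (T : Finset ℕ) : PrimrecPred (· ∈ T) := by
  classical
  induction T using Finset.induction_on with
  | empty => exact ⟨inferInstance, (Primrec.const false).of_eq fun n => by simp⟩
  | @insert a s ha ih =>
      have h1 : PrimrecPred fun n : ℕ => n = a :=
        Primrec.eq.comp .id (.const a)
      have := h1.or ih
      exact this.of_eq fun n => by simp [Finset.mem_insert]

open Classical in
theorem recIn_modify (O : ℕ → ℕ) (T : Finset ℕ) :
    OracleRecursiveIn O ↑(fun n => if n ∈ T then 0 else O n) := by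
  classical
  set d : ℕ → ℕ := fun n => if n ∈ T then 1 else 0 with hd_def
  have hd_pr : Primrec d :=
    Primrec.ite (primrecPred_mem_finset T) (Primrec.const 1) (Primrec.const 0)
  have hd : Nat.Partrec ↑d := Partrec.nat_iff.mp hd_pr.to_comp
  set g : ℕ → ℕ := fun m => if m.unpair.1 = 0 then m.unpair.2 else 0 with hg_def
  have hg_pr : Primrec g := by
    have h1 : PrimrecPred fun m : ℕ => m.unpair.1 = 0 :=
      Primrec.eq.comp (Primrec.fst.comp Primrec.unpair) (Primrec.const 0)
    exact Primrec.ite h1 (Primrec.snd.comp Primrec.unpair) (Primrec.const 0)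
  have hg : Nat.Partrec ↑g := Partrec.nat_iff.mp hg_pr.to_comp
  have h1 : OracleRecursiveIn O fun n => Nat.pair <$> (↑d : ℕ →. ℕ) n <*> (↑O : ℕ →. ℕ) n :=
    .pair (.of_partrec hd) .oracle
  have h2 : OracleRecursiveIn O fun n =>
      (Nat.pair <$> (↑d : ℕ →. ℕ) n <*> (↑O : ℕ →. ℕ) n) >>= (g : ℕ →. ℕ) :=
    .comp (.of_partrec hg) h1
  refine h2.of_eq' fun n => ?_
  by_cases hn : n ∈ T <;>
    simp [hd_def, hg_def, hn, Seq.seq, PFun.coe_val, Part.bind_some] <;>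
    exact (Part.bind_some _ _).trans (by simp [PFun.coe_val])

open Classical in
theorem chi_join_diff (X Z S : Set ℕ) (hS : S.Finite) :
    ∃ T : Finset ℕ,
      chi (join (X \ S) Z) = fun n => if n ∈ T then 0 else chi (join X Z) n := by
  classical
  refine ⟨hS.toFinset.image (fun m => 2 * m), funext fun k => ?_⟩
  by_cases hk : k ∈ hS.toFinset.image (fun m => 2 * m)
  · simp only [hk, if_true]
    simp only [Finset.mem_image, Set.Finite.mem_toFinset] at hk
    obtain ⟨m, hmS, rfl⟩ := hk
    have : 2 * m ∉ join (X \ S) Z := by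
      rintro (⟨a, ⟨-, haS⟩, hae⟩ | ⟨a, -, hae⟩)
      · have hma : a = m := by omega
        exact haS (hma ▸ hmS)
      · omega
    simp [chi, this]
  · simp only [hk, if_false]
    have : k ∈ join (X \ S) Z ↔ k ∈ join X Z := by
      constructor
      · rintro (⟨a, ⟨haX, -⟩, rfl⟩ | ⟨a, haZ, rfl⟩)
        · exact Or.inl ⟨a, haX, rfl⟩
        · exact Or.inr ⟨a, haZ, rfl⟩
      · rintro (⟨a, haX, rfl⟩ | ⟨a, haZ, rfl⟩)
        · refine Or.inl ⟨a, ⟨haX, fun haS => hk ?_⟩, rfl⟩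
          simp only [Finset.mem_image, Set.Finite.mem_toFinset]
          exact ⟨a, haS, rfl⟩
        · exact Or.inr ⟨a, haZ, rfl⟩
    by_cases h2 : k ∈ join X Z <;> simp [chi, h2, this]

theorem hyper_diff {Z B X : Set ℕ} (S : Set ℕ) (hS : S.Finite)
    (h : Hyperimmune (join X Z) B) : Hyperimmune (join (X \ S) Z) B := by
  intro f hf hdis
  obtain ⟨T, hT⟩ := chi_join_diff X Z S hS
  have hmod : OracleRecursiveIn (chi (join X Z)) ↑(chi (join (X \ S) Z)) := by
    rw [hT]; exact recIn_modify _ T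
  exact h f (OracleRecursiveIn.trans' hmod hf) hdis

/-- Forcing limitlessness: every condition can be extended so as to capture, above
any threshold `p`, an element outside each part `A i` of a non-trivial partition. -/
theorem stmt15 (n : ℕ) (hn : 1 ≤ n) (Z : Set ℕ)
    (B : Fin n → Set ℕ) (hB : ∀ j, Hyperimmune Z (B j))
    (A : Fin (n + 1) → Set ℕ)
    (hdisj : ∀ i j : Fin (n + 1), i ≠ j → A i ∩ A j = ∅)
    (hcover : (⋃ i, A i) = Set.univ)
    (hnt : NonTrivial n Z B A)
    (F : Finset ℕ) (X : Set ℕ) (hFX : PCond n Z B F X) (p : ℕ) :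
    ∃ (E : Finset ℕ) (Y : Set ℕ), PCond n Z B E Y ∧ MathiasExtends E Y F X ∧
      ∃ m : Fin (n + 1) → ℕ, ∀ i : Fin (n + 1),
        p < m i ∧ m i ∈ E ∧ m i ∉ A i := by
  classical
  obtain ⟨⟨hXinf, hFlt⟩, hhyp⟩ := hFX
  have key : ∀ i : Fin (n + 1), (X \ A i).Infinite := by
    intro i
    by_contra hfin
    rw [Set.not_infinite] at hfin
    apply hnt
    have hHeq : X \ (X \ A i) = X ∩ A i := by
      ext x; simp
    refine ⟨X ∩ A i, ?_, ?_, ?_⟩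
    · rw [← hHeq]; exact hXinf.diff hfin
    · obtain ⟨j, hj⟩ : ∃ j : Fin (n + 1), j ≠ i := by
        by_cases h : i = 0
        · refine ⟨⟨1, by omega⟩, ?_⟩
          subst h
          simp [Fin.ext_iff]
        · exact ⟨0, fun he => h he.symm⟩
      refine ⟨j, ?_⟩
      have hd := hdisj i j fun he => hj he.symm
      apply Set.eq_empty_iff_forall_notMem.mpr
      intro x hx
      exact Set.eq_empty_iff_forall_notMem.mp hd x ⟨hx.1.2, hx.2⟩
    · intro j
      have := hyper_diff (X \ A i) hfin (hhyp j)
      rwa [hHeq] at this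
  choose m hm using fun i : Fin (n + 1) => (key i).exists_gt p
  set E : Finset ℕ := F ∪ Finset.image m Finset.univ with hE_def
  set N : ℕ := E.sup id with hN_def
  set Y : Set ℕ := X \ Set.Iic N with hY_def
  have hYX : Y ⊆ X := Set.diff_subset
  have hYinf : Y.Infinite := hXinf.diff (Set.finite_Iic N)
  have hEY : ∀ a ∈ E, ∀ b ∈ Y, a < b := by
    intro a ha b hb
    have h1 : a ≤ N := Finset.le_sup (f := id) ha
    have h2 : ¬ b ≤ N := hb.2
    omega
  refine ⟨E, Y, ⟨⟨hYinf, hEY⟩, fun j => hyper_diff (Set.Iic N) (Set.finite_Iic N) (hhyp j)⟩,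
    ⟨Finset.subset_union_left, hYX, ?_⟩, m, fun i => ?_⟩
  · intro x hx
    simp only [Finset.coe_sdiff, Set.mem_diff, Finset.mem_coe] at hx
    rcases Finset.mem_union.mp hx.1 with h | h
    · exact absurd h hx.2
    · obtain ⟨i, -, rfl⟩ := Finset.mem_image.mp h
      exact (hm i).1.1
  · refine ⟨(hm i).2, ?_, (hm i).1.2⟩
    exact Finset.mem_union_right _ (Finset.mem_image.mpr ⟨i, Finset.mem_univ i, rfl⟩)
end
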